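/- arXiv:2403.07878 — 9 statements merged into one kernel-verified Lean document; each statement's English description precedes it below -/
import Mathlib

section
/- For all complex numbers x and non-negative integers n, the sum over k from 0 to n of binom(n,k) * (-1)^k * x^(k+1) * (1+x)^(n-k) / (k+1) equals ((1+x)^(n+1) - 1)/(n+1). -/
open Finset

/-- Lucas numbers on naturals. -/
def lucasNat : ℕ → ℤ
  | 0 => 2
  | 1 => 1
  | n + 2 => lucasNat (n + 1) + lucasNat n

/-- Fibonacci numbers extended to integer indices: `F_{-m} = (-1)^(m-1) F_m`. -/
def fibZ (n : ℤ) : ℤ :=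
  if 0 ≤ n then (Nat.fib n.toNat : ℤ) else (-1) ^ ((-n).toNat + 1) * (Nat.fib (-n).toNat : ℤ)

/-- Lucas numbers extended to integer indices: `L_{-m} = (-1)^m L_m`. -/
def lucasZ (n : ℤ) : ℤ :=
  if 0 ≤ n then lucasNat n.toNat else (-1) ^ (-n).toNat * lucasNat (-n).toNat

theorem stmt_0 (x : ℂ) (n : ℕ) :
    ∑ k ∈ range (n + 1),
      (n.choose k : ℂ) * (-1) ^ k * x ^ (k + 1) * (1 + x) ^ (n - k) / (k + 1) =
    ((1 + x) ^ (n + 1) - 1) / (n + 1) := by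
  have hn : ((n : ℂ) + 1) ≠ 0 := Nat.cast_add_one_ne_zero n
  have key : ∀ k ∈ range (n + 1),
      (n.choose k : ℂ) * (-1) ^ k * x ^ (k + 1) * (1 + x) ^ (n - k) / (k + 1)
      = -((-x) ^ (k + 1) * (1 + x) ^ (n + 1 - (k + 1)) * ((n + 1).choose (k + 1) : ℂ))
          / ((n : ℂ) + 1) := by
    intro k hk
    have hc : ((n : ℂ) + 1) * (n.choose k : ℂ) = ((n + 1).choose (k + 1) : ℂ) * ((k : ℂ) + 1) := by
      exact_mod_cast congrArg (Nat.cast : ℕ → ℂ) (Nat.add_one_mul_choose_eq n k)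
    have hkc : ((k : ℂ) + 1) ≠ 0 := Nat.cast_add_one_ne_zero k
    have hsub : n + 1 - (k + 1) = n - k := by omega
    rw [hsub, div_eq_div_iff hkc hn, neg_pow, pow_succ]
    linear_combination ((-1 : ℂ) ^ k * x ^ (k + 1) * (1 + x) ^ (n - k)) * hc
  rw [Finset.sum_congr rfl key]
  have hb : (1 : ℂ) = ∑ j ∈ range (n + 2),
      (-x) ^ j * (1 + x) ^ (n + 1 - j) * ((n + 1).choose j : ℂ) := by
    calc (1 : ℂ) = (-x + (1 + x)) ^ (n + 1) := by ring
    _ = _ := add_pow (-x) (1 + x) (n + 1)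
  rw [Finset.sum_range_succ'] at hb
  simp only [pow_zero, Nat.sub_zero, Nat.choose_zero_right, Nat.cast_one, one_mul, mul_one] at hb
  have hsum : ∑ k ∈ range (n + 1),
      (-x) ^ (k + 1) * (1 + x) ^ (n + 1 - (k + 1)) * ((n + 1).choose (k + 1) : ℂ)
      = 1 - (1 + x) ^ (n + 1) := by linear_combination -hb
  rw [← Finset.sum_div, Finset.sum_neg_distrib, hsum]
  ring
end

section
/- For all complex numbers x and non-negative integers n, the sum over k from 0 to n of binom(n,k) * (-1)^k * x^(k+2) * (1+x)^(n-k) / (k+2) equals ((1+x)^(n+2) - (n+2)*x - 1)/((n+1)*(n+2)). -/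
open Finset

lemma aux_binom (a b : ℂ) (m : ℕ) :
    ∑ j ∈ range (m + 1), (m.choose j : ℂ) * a ^ j * b ^ (m - j) = (a + b) ^ m := by
  rw [add_pow]
  exact Finset.sum_congr rfl fun j _ => by ring

lemma aux_deriv (a b : ℂ) (m : ℕ) :
    ∑ j ∈ range (m + 2), (j : ℂ) * ((m + 1).choose j : ℂ) * a ^ j * b ^ (m + 1 - j) =
      ((m : ℂ) + 1) * a * (a + b) ^ m := by
  rw [Finset.sum_range_succ']
  simp only [Nat.cast_zero, zero_mul, add_zero]
  rw [← aux_binom a b m, Finset.mul_sum]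
  refine Finset.sum_congr rfl fun i _ => ?_
  have h := Nat.add_one_mul_choose_eq m i
  have hc : ((m : ℂ) + 1) * (m.choose i : ℂ) = ((m + 1).choose (i + 1) : ℂ) * ((i : ℂ) + 1) := by
    exact_mod_cast congrArg (Nat.cast : ℕ → ℂ) h
  have hsub : m + 1 - (i + 1) = m - i := by omega
  rw [hsub]
  push_cast
  linear_combination -a ^ (i + 1) * b ^ (m - i) * hc

lemma aux_num (x : ℂ) (n : ℕ) :
    ∑ k ∈ range (n + 1),
      ((k : ℂ) + 1) * ((n + 2).choose (k + 2) : ℂ) * (-x) ^ (k + 2) * (1 + x) ^ (n - k) =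
    (1 + x) ^ (n + 2) - ((n : ℂ) + 2) * x - 1 := by
  have hfull : ∑ j ∈ range (n + 3),
      ((j : ℂ) - 1) * ((n + 2).choose j : ℂ) * (-x) ^ j * (1 + x) ^ (n + 2 - j) =
      -(((n : ℂ) + 2) * x) - 1 := by
    have h1 := aux_deriv (-x) (1 + x) (n + 1)
    have h2 := aux_binom (-x) (1 + x) (n + 2)
    have hone : -x + (1 + x) = (1 : ℂ) := by ring
    rw [hone, one_pow] at h1 h2
    calc ∑ j ∈ range (n + 3),
          ((j : ℂ) - 1) * ((n + 2).choose j : ℂ) * (-x) ^ j * (1 + x) ^ (n + 2 - j)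
        = (∑ j ∈ range (n + 3), (j : ℂ) * ((n + 2).choose j : ℂ) * (-x) ^ j * (1 + x) ^ (n + 2 - j))
          - ∑ j ∈ range (n + 3), ((n + 2).choose j : ℂ) * (-x) ^ j * (1 + x) ^ (n + 2 - j) := by
          rw [← Finset.sum_sub_distrib]
          exact Finset.sum_congr rfl fun j _ => by ring
      _ = -(((n : ℂ) + 2) * x) - 1 := by
          have e1 : (n + 1) + 2 = n + 3 := by omega
          have e2 : (n + 2) + 1 = n + 3 := by omega
          rw [e1] at h1; rw [e2] at h2
          have : (n + 1 : ℕ) + 1 = n + 2 := by omega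
          rw [show ((n+1:ℕ)+1 : ℕ) = n + 2 from rfl] at h1
          rw [show ((n+1:ℕ)+1 : ℕ) = n + 2 from rfl] at h1
          rw [h1, h2]
          push_cast
          ring
  rw [Finset.sum_range_succ', Finset.sum_range_succ'] at hfull
  have hidx : ∀ k : ℕ, k + 1 + 1 = k + 2 := fun _ => rfl
  simp only [hidx] at hfull
  push_cast at hfull
  simp only [pow_zero, mul_one, Nat.choose_zero_right, Nat.choose_one_right] at hfull
  have hsub : ∀ k, n + 2 - (k + 2) = n - k := fun k => by omega
  calc ∑ k ∈ range (n + 1),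
        ((k : ℂ) + 1) * ((n + 2).choose (k + 2) : ℂ) * (-x) ^ (k + 2) * (1 + x) ^ (n - k)
      = ∑ k ∈ range (n + 1),
        ((k : ℂ) + 2 - 1) * ((n + 2).choose (k + 2) : ℂ) * (-x) ^ (k + 2)
          * (1 + x) ^ (n - k) := by
        exact Finset.sum_congr rfl fun k _ => by ring
    _ = (1 + x) ^ (n + 2) - ((n : ℂ) + 2) * x - 1 := by
        linear_combination hfull

theorem stmt_1 (x : ℂ) (n : ℕ) :
    ∑ k ∈ range (n + 1),
      (n.choose k : ℂ) * (-1) ^ k * x ^ (k + 2) * (1 + x) ^ (n - k) / (k + 2) =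
    ((1 + x) ^ (n + 2) - (n + 2) * x - 1) / ((n + 1) * (n + 2)) := by
  have hn1 : ((n : ℂ) + 1) ≠ 0 := by
    have : ((n + 1 : ℕ) : ℂ) ≠ 0 := Nat.cast_ne_zero.mpr (by omega)
    push_cast at this; exact this
  have hn2 : ((n : ℂ) + 2) ≠ 0 := by
    have : ((n + 2 : ℕ) : ℂ) ≠ 0 := Nat.cast_ne_zero.mpr (by omega)
    push_cast at this; exact this
  have key : ∀ k ∈ range (n + 1),
      (n.choose k : ℂ) * (-1) ^ k * x ^ (k + 2) * (1 + x) ^ (n - k) / ((k : ℂ) + 2) =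
      ((k : ℂ) + 1) * ((n + 2).choose (k + 2) : ℂ) * (-x) ^ (k + 2) * (1 + x) ^ (n - k)
        / (((n : ℂ) + 1) * ((n : ℂ) + 2)) := by
    intro k _
    have hk2 : ((k : ℂ) + 2) ≠ 0 := by
      have : ((k + 2 : ℕ) : ℂ) ≠ 0 := Nat.cast_ne_zero.mpr (by omega)
      push_cast at this; exact this
    have h1 : ((n : ℂ) + 2) * (((n + 1).choose (k + 1) : ℕ) : ℂ)
        = ((n + 2).choose (k + 2) : ℂ) * ((k : ℂ) + 2) := by
      have := congrArg (Nat.cast : ℕ → ℂ) (Nat.add_one_mul_choose_eq (n + 1) (k + 1))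
      push_cast at this
      linear_combination this
    have h2 : ((n : ℂ) + 1) * ((n.choose k : ℕ) : ℂ)
        = (((n + 1).choose (k + 1) : ℕ) : ℂ) * ((k : ℂ) + 1) := by
      have := congrArg (Nat.cast : ℕ → ℂ) (Nat.add_one_mul_choose_eq n k)
      push_cast at this
      linear_combination this
    have hx : (-x) ^ (k + 2) = (-1 : ℂ) ^ k * x ^ (k + 2) := by
      rw [neg_pow, pow_add]; ring
    rw [div_eq_div_iff hk2 (mul_ne_zero hn1 hn2), hx]
    linear_combination ((-1 : ℂ) ^ k * x ^ (k + 2) * (1 + x) ^ (n - k)) *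
      (((k : ℂ) + 1) * h1 + ((n : ℂ) + 2) * h2)
  rw [Finset.sum_congr rfl key, ← Finset.sum_div, aux_num]
end

section
/- For all complex numbers x and non-negative integers n, the sum over k from 0 to n of binom(n,k) * (-1)^k * x^(k+2) * (1+x)^(n-k) / ((k+1)*(k+2)) equals ((n+1)*x*(1+x)^(n+1) - (1+x)^(n+1) + 1)/((n+1)*(n+2)). -/
open Finset

lemma coeff_nat (n k : ℕ) (h : k ≤ n) :
    (n.choose k) * ((n+1)*(n+2)) = ((n+2).choose (k+2)) * ((k+1)*(k+2)) := by
  have h1 : (n+1) * n.choose k = (n+1).choose (k+1) * (k+1) := Nat.add_one_mul_choose_eq n k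
  have h2 : (n+2) * (n+1).choose (k+1) = (n+2).choose (k+2) * (k+2) :=
    Nat.add_one_mul_choose_eq (n+1) (k+1)
  calc (n.choose k) * ((n+1)*(n+2)) = (n+2) * ((n+1) * n.choose k) := by ring
    _ = (n+2) * ((n+1).choose (k+1) * (k+1)) := by rw [h1]
    _ = ((n+2) * (n+1).choose (k+1)) * (k+1) := by ring
    _ = ((n+2).choose (k+2) * (k+2)) * (k+1) := by rw [h2]
    _ = _ := by ring

theorem stmt_2 (x : ℂ) (n : ℕ) :
    ∑ k ∈ range (n + 1),
      (n.choose k : ℂ) * (-1) ^ k * x ^ (k + 2) * (1 + x) ^ (n - k) / ((k + 1) * (k + 2)) =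
    ((n + 1) * x * (1 + x) ^ (n + 1) - (1 + x) ^ (n + 1) + 1) / ((n + 1) * (n + 2)) := by
  set D : ℂ := ((n:ℂ) + 1) * ((n:ℂ) + 2) with hD
  have haux : ∀ m : ℕ, ((m:ℂ) + 1) ≠ 0 := fun m => Nat.cast_add_one_ne_zero m
  have haux2 : ∀ m : ℕ, ((m:ℂ) + 2) ≠ 0 := by
    intro m
    have := Nat.cast_add_one_ne_zero (R := ℂ) (m+1)
    push_cast at this
    intro h; exact this (by linear_combination h)
  have hDne : D ≠ 0 := mul_ne_zero (haux n) (haux2 n)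
  have hterm : ∀ k ∈ range (n+1),
      (n.choose k : ℂ) * (-1) ^ k * x ^ (k + 2) * (1 + x) ^ (n - k) / ((k + 1) * (k + 2)) =
      ((n+2).choose (k+2) : ℂ) * (-x) ^ (k + 2) * (1 + x) ^ (n - k) / D := by
    intro k hk
    have hk' : k ≤ n := Nat.lt_succ_iff.mp (mem_range.mp hk)
    have hkne : ((k:ℂ) + 1) * ((k:ℂ) + 2) ≠ 0 := mul_ne_zero (haux k) (haux2 k)
    rw [div_eq_div_iff hkne hDne]
    have hc : ((n.choose k : ℂ)) * (((n:ℂ)+1)*((n:ℂ)+2)) =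
        ((n+2).choose (k+2) : ℂ) * (((k:ℂ)+1)*((k:ℂ)+2)) := by
      exact_mod_cast congrArg (fun m : ℕ => (m : ℂ)) (coeff_nat n k hk')
    have hx : (-x) ^ (k+2) = (-1:ℂ)^k * x^(k+2) := by
      rw [neg_pow, pow_add]; ring
    rw [hx, hD]
    linear_combination ((-1:ℂ)^k * x^(k+2) * (1+x)^(n-k)) * hc
  rw [Finset.sum_congr rfl hterm, ← Finset.sum_div]
  -- binomial theorem
  have hbin : ∑ j ∈ range (n+3), (-x)^j * (1+x)^(n+2-j) * ((n+2).choose j : ℂ)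
      = 1 := by
    rw [← add_pow]
    norm_num
  rw [Finset.sum_range_succ' _ (n+2), Finset.sum_range_succ' _ (n+1)] at hbin
  have hsimp : ∀ k ∈ range (n+1),
      (-x)^(k+1+1) * (1+x)^(n+2-(k+1+1)) * ((n+2).choose (k+1+1) : ℂ)
      = ((n+2).choose (k+2) : ℂ) * (-x) ^ (k + 2) * (1 + x) ^ (n - k) := by
    intro k hk
    have : n + 2 - (k+1+1) = n - k := by omega
    rw [this]; ring
  rw [Finset.sum_congr rfl hsimp] at hbin
  have hsum : ∑ k ∈ range (n+1), ((n+2).choose (k+2) : ℂ) * (-x) ^ (k + 2) * (1 + x) ^ (n - k)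
      = 1 - (1+x)^(n+2) + ((n:ℂ)+2) * x * (1+x)^(n+1) := by
    have h0 : (-x)^0 * (1+x)^(n+2-0) * ((n+2).choose 0 : ℂ) = (1+x)^(n+2) := by simp
    have h1 : (-x)^(0+1) * (1+x)^(n+2-(0+1)) * ((n+2).choose (0+1) : ℂ)
        = -(((n:ℂ)+2) * x * (1+x)^(n+1)) := by
      simp [Nat.choose_one_right]
      push_cast
      ring
    rw [h0, h1] at hbin
    linear_combination hbin
  rw [hsum, hD]
  congr 1
  rw [pow_succ]
  ring
end

section
/- For all complex numbers x and non-negative integers n, the sum over k from 0 to n of binom(n,k) * (-1)^k * x^k * (1+x)^(n-k) / (k+2) equals the sum over k from 0 to n of binom(n,k) * x^k / ((k+1)*(k+2)). -/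
open Finset

open Nat in
lemma key_alt_sum : ∀ (m : ℕ) (a : ℕ),
    ∑ k ∈ range (m + 1), (m.choose k : ℂ) * (-1) ^ k / (k + a + 1) =
      (m ! : ℂ) * (a ! : ℂ) / ((m + a + 1)! : ℂ) := by
  intro m
  induction m with
  | zero =>
    intro a
    have hs : ((a : ℂ) + 1) ≠ 0 := by
      have : ((a + 1 : ℕ) : ℂ) ≠ 0 := Nat.cast_ne_zero.2 (by omega)
      push_cast at this; exact this
    rw [Finset.sum_range_one, show (0:ℕ) + a + 1 = a + 1 by ring, Nat.factorial_succ]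
    push_cast
    rw [Nat.factorial_zero]
    have hf : ((a)! : ℂ) ≠ 0 := Nat.cast_ne_zero.2 (Nat.factorial_ne_zero _)
    field_simp
    simp
  | succ m ih =>
    intro a
    have h1 := Finset.sum_range_succ' (fun k => ((m+1).choose k : ℂ) * (-1)^k / (k + a + 1)) (m+1)
    have h3 := Finset.sum_range_succ' (fun k => ((m).choose k : ℂ) * (-1)^k / (k + a + 1)) (m+1)
    have h4 := Finset.sum_range_succ (fun k => ((m).choose k : ℂ) * (-1)^k / (k + a + 1)) (m+1)
    push_cast at h1 h3 h4
    rw [Nat.choose_succ_self] at h4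
    simp only [Nat.cast_zero, zero_mul, zero_div, add_zero] at h4
    have h2 : ∑ k ∈ range (m + 1), (((m+1).choose (k+1) : ℂ)) * (-1) ^ (k+1) / ((k:ℂ) + 1 + a + 1)
        = (∑ k ∈ range (m + 1), - ((m.choose k : ℂ) * (-1) ^ k / ((k:ℂ) + (a+1) + 1)))
          + ∑ k ∈ range (m + 1), (m.choose (k+1) : ℂ) * (-1) ^ (k+1) / ((k:ℂ) + 1 + a + 1) := by
      rw [← Finset.sum_add_distrib]
      apply Finset.sum_congr rfl; intro k _
      rw [Nat.choose_succ_succ]; push_cast; ring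
    rw [h1, h2]
    have ih1 := ih (a+1)
    push_cast at ih1
    rw [Finset.sum_neg_distrib, ih1]
    have h6 : ∑ k ∈ range (m + 1), (m.choose (k+1) : ℂ) * (-1) ^ (k+1) / ((k:ℂ) + 1 + a + 1)
          + ((m+1).choose 0 : ℂ) * (-1) ^ 0 / ((0:ℂ) + a + 1)
        = ∑ k ∈ range (m + 1), (m.choose k : ℂ) * (-1) ^ k / ((k:ℂ) + a + 1) := by
      rw [show ((m+1).choose 0 : ℂ) = (m.choose 0 : ℂ) by norm_num, ← h3, h4]
    rw [add_assoc, h6, ih a]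
    have e1 : m + (a+1) + 1 = (m + a + 1) + 1 := by ring
    have e2 : (m+1) + a + 1 = (m + a + 1) + 1 := by ring
    rw [e1, e2, Nat.factorial_succ (m+a+1), Nat.factorial_succ a, Nat.factorial_succ m]
    have hf : ((m + a + 1)! : ℂ) ≠ 0 := Nat.cast_ne_zero.2 (Nat.factorial_ne_zero _)
    have hs2 : ((m + a + 1 + 1 : ℕ) : ℂ) ≠ 0 := Nat.cast_ne_zero.2 (by omega)
    push_cast at hs2 ⊢
    field_simp
    ring

theorem stmt_3 (x : ℂ) (n : ℕ) :
    ∑ k ∈ range (n + 1),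
      (n.choose k : ℂ) * (-1) ^ k * x ^ k * (1 + x) ^ (n - k) / (k + 2) =
    ∑ k ∈ range (n + 1), (n.choose k : ℂ) * x ^ k / ((k + 1) * (k + 2)) := by
  have step1 : ∑ k ∈ range (n + 1),
      (n.choose k : ℂ) * (-1) ^ k * x ^ k * (1 + x) ^ (n - k) / (k + 2)
      = ∑ k ∈ range (n + 1), ∑ j ∈ range (n - k + 1),
        (n.choose k : ℂ) * ((n-k).choose j : ℂ) * (-1) ^ k * x ^ (k + j) / (k + 2) := by
    apply Finset.sum_congr rfl
    intro k _
    rw [add_comm (1:ℂ) x, add_pow, Finset.mul_sum, Finset.sum_div]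
    apply Finset.sum_congr rfl
    intro j _
    rw [pow_add]
    ring
  have step2 : ∑ k ∈ range (n + 1), ∑ j ∈ range (n - k + 1),
        (n.choose k : ℂ) * ((n-k).choose j : ℂ) * (-1) ^ k * x ^ (k + j) / (k + 2)
      = ∑ m ∈ range (n + 1), ∑ k ∈ range (m + 1),
        (n.choose m : ℂ) * (m.choose k : ℂ) * (-1) ^ k * x ^ m / (k + 2) := by
    rw [Finset.sum_sigma', Finset.sum_sigma']
    refine Finset.sum_nbij' (i := fun p => (⟨p.1 + p.2, p.1⟩ : Σ _ : ℕ, ℕ))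
        (j := fun p => (⟨p.2, p.1 - p.2⟩ : Σ _ : ℕ, ℕ)) ?_ ?_ ?_ ?_ ?_
    · rintro ⟨k, j⟩ hp
      simp only [Finset.mem_sigma, Finset.mem_range] at hp ⊢
      omega
    · rintro ⟨m, k⟩ hp
      simp only [Finset.mem_sigma, Finset.mem_range] at hp ⊢
      omega
    · rintro ⟨k, j⟩ hp
      simp only [Finset.mem_sigma, Finset.mem_range] at hp
      simp only [Sigma.mk.inj_iff, heq_eq_eq]
      exact ⟨trivial, by omega⟩
    · rintro ⟨m, k⟩ hp
      simp only [Finset.mem_sigma, Finset.mem_range] at hp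
      simp only [Sigma.mk.inj_iff, heq_eq_eq]
      exact ⟨by omega, trivial⟩
    · rintro ⟨k, j⟩ hp
      simp only [Finset.mem_sigma, Finset.mem_range] at hp
      simp only
      have hkn : k + j ≤ n := by omega
      have hsk : k ≤ k + j := by omega
      have hth := Nat.choose_mul (n := n) hsk
      rw [Nat.add_sub_cancel_left] at hth
      have hc : ((n.choose (k+j)) : ℂ) * ((k+j).choose k : ℕ)
          = ((n.choose k) : ℂ) * ((n-k).choose j : ℕ) := by
        rw [← Nat.cast_mul, ← Nat.cast_mul, hth]
      rw [show ((n.choose (k+j)) : ℂ) * ((k+j).choose k) * (-1)^k * x^(k+j) / ((k:ℂ)+2)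
          = (((n.choose (k+j)) : ℂ) * ((k+j).choose k)) * ((-1)^k * x^(k+j) / ((k:ℂ)+2)) by
          ring, hc]
      ring
  have step3 : ∀ m : ℕ, ∑ k ∈ range (m + 1), (m.choose k : ℂ) * (-1) ^ k / (k + 2)
      = 1 / (((m:ℂ) + 1) * ((m:ℂ) + 2)) := by
    intro m
    have h := key_alt_sum m 1
    have hm2 : Nat.factorial (m + 1 + 1) = (m + 2) * ((m + 1) * Nat.factorial m) := by
      rw [Nat.factorial_succ, Nat.factorial_succ]
    rw [show Nat.factorial 1 = 1 from rfl, Nat.cast_one, mul_one, hm2] at h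
    have hf : ((Nat.factorial m) : ℂ) ≠ 0 := Nat.cast_ne_zero.2 (Nat.factorial_ne_zero _)
    have h1 : ((m:ℂ) + 1) ≠ 0 := by
      have : ((m + 1 : ℕ) : ℂ) ≠ 0 := Nat.cast_ne_zero.2 (by omega)
      push_cast at this; exact this
    have h2 : ((m:ℂ) + 2) ≠ 0 := by
      have : ((m + 2 : ℕ) : ℂ) ≠ 0 := Nat.cast_ne_zero.2 (by omega)
      push_cast at this; exact this
    push_cast at h
    rw [show ∑ k ∈ range (m + 1), (m.choose k : ℂ) * (-1) ^ k / (k + 2)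
        = ∑ k ∈ range (m + 1), (m.choose k : ℂ) * (-1) ^ k / ((k:ℂ) + 1 + 1) by
        apply Finset.sum_congr rfl; intro k _; ring_nf, h]
    field_simp
  rw [step1, step2]
  apply Finset.sum_congr rfl
  intro m _
  rw [show ∑ k ∈ range (m + 1), (n.choose m : ℂ) * (m.choose k : ℂ) * (-1) ^ k * x ^ m / (k + 2)
      = ((n.choose m : ℂ) * x ^ m) * ∑ k ∈ range (m + 1), (m.choose k : ℂ) * (-1) ^ k / (k + 2) by
      rw [Finset.mul_sum]; apply Finset.sum_congr rfl; intro k _; ring, step3 m]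
  ring
end

section
/- For any integers r, s, t and non-negative integer n: sum_{k=0}^n binom(n,k) * (-1)^(s(k+1)+1+t) * F_r^(k+1) * F_s^(n-k) * L_{rn - s(k+1) - rk - t} / (k+1) = ((-1)^t * F_s^(n+1) * L_{r(n+1)-t} - L_t * F_{r+s}^(n+1)) / (n+1). -/
open Finset

open Real goldenRatio

noncomputable def Fz (m : ℤ) : ℝ := (φ ^ m - ψ ^ m) / √5
noncomputable def Lz (m : ℤ) : ℝ := φ ^ m + ψ ^ m

lemma sqrt5_ne_zero : (√5 : ℝ) ≠ 0 := by positivity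

lemma zpow_int_nat (x : ℝ) (a : ℤ) (m : ℕ) : x ^ (a * m) = (x ^ a) ^ m := by
  rw [zpow_mul, zpow_natCast]

lemma gold_zpow_neg (s : ℤ) : φ ^ (-s) = (-1 : ℝ) ^ s * ψ ^ s := by
  rw [zpow_neg, ← inv_zpow, inv_goldenRatio, show (-ψ : ℝ) = (-1) * ψ by ring, mul_zpow]

lemma goldConj_zpow_neg (s : ℤ) : ψ ^ (-s) = (-1 : ℝ) ^ s * φ ^ s := by
  rw [zpow_neg, ← inv_zpow, inv_goldenConj, show (-φ : ℝ) = (-1) * φ by ring, mul_zpow]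

lemma neg_one_zpow_sq (s : ℤ) : (-1 : ℝ) ^ s * (-1 : ℝ) ^ s = 1 := by
  rw [← mul_zpow]; norm_num

lemma lucasNat_real : ∀ n : ℕ, ((lucasNat n : ℤ) : ℝ) = φ ^ n + ψ ^ n := by
  intro n
  induction n using Nat.twoStepInduction with
  | zero => show ((2 : ℤ) : ℝ) = _; norm_num
  | one => show ((1 : ℤ) : ℝ) = _; rw [pow_one, pow_one, goldenRatio_add_goldenConj]; norm_num
  | more n ih1 ih2 =>
    have h1 : φ ^ (n + 2) = φ ^ (n + 1) + φ ^ n := by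
      have : φ ^ (n + 2) = φ ^ n * φ ^ 2 := by ring
      rw [this, goldenRatio_sq]; ring
    have h2 : ψ ^ (n + 2) = ψ ^ (n + 1) + ψ ^ n := by
      have : ψ ^ (n + 2) = ψ ^ n * ψ ^ 2 := by ring
      rw [this, goldenConj_sq]; ring
    have h3 : lucasNat (n + 2) = lucasNat (n + 1) + lucasNat n := rfl
    rw [h3, h1, h2]; push_cast; rw [ih1, ih2]; ring

lemma fibZ_real (m : ℤ) : ((fibZ m : ℤ) : ℝ) = Fz m := by
  unfold fibZ Fz
  rcases le_or_gt 0 m with h | h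
  · obtain ⟨k, rfl⟩ := Int.eq_ofNat_of_zero_le h
    rw [if_pos h, Int.toNat_natCast, zpow_natCast, zpow_natCast]
    push_cast
    rw [Real.coe_fib_eq]
  · rw [if_neg (not_le.mpr h)]
    have hm : m = -(((-m).toNat : ℕ) : ℤ) := by omega
    set k := (-m).toNat with hk
    rw [hm]
    rw [zpow_neg, zpow_neg, zpow_natCast, zpow_natCast, ← inv_pow, ← inv_pow, inv_goldenRatio,
      inv_goldenConj]
    have h1 : ((-ψ : ℝ)) ^ k = (-1 : ℝ) ^ k * ψ ^ k := by rw [neg_pow]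
    have h2 : ((-φ : ℝ)) ^ k = (-1 : ℝ) ^ k * φ ^ k := by rw [neg_pow]
    rw [h1, h2]
    push_cast
    rw [Real.coe_fib_eq, pow_succ]
    have h5 := sqrt5_ne_zero
    field_simp
    ring

lemma lucasZ_real (m : ℤ) : ((lucasZ m : ℤ) : ℝ) = Lz m := by
  unfold lucasZ Lz
  rcases le_or_gt 0 m with h | h
  · rw [if_pos h, show m = ((m.toNat : ℕ) : ℤ) by omega, zpow_natCast, zpow_natCast]
    exact lucasNat_real _
  · rw [if_neg (not_le.mpr h)]
    have hm : m = -(((-m).toNat : ℕ) : ℤ) := by omega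
    set k := (-m).toNat with hk
    rw [hm, zpow_neg, zpow_neg, zpow_natCast, zpow_natCast, ← inv_pow, ← inv_pow, inv_goldenRatio,
      inv_goldenConj]
    have h1 : ((-ψ : ℝ)) ^ k = (-1 : ℝ) ^ k * ψ ^ k := by rw [neg_pow]
    have h2 : ((-φ : ℝ)) ^ k = (-1 : ℝ) ^ k * φ ^ k := by rw [neg_pow]
    rw [h1, h2]
    push_cast
    rw [lucasNat_real]
    ring

lemma key_gold (r s : ℤ) : (-1 : ℝ) ^ s * Fz r * φ ^ (-s) + Fz s * φ ^ r = Fz (r + s) := by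
  rw [gold_zpow_neg]
  have h : (-1 : ℝ) ^ s * Fz r * ((-1 : ℝ) ^ s * ψ ^ s) = Fz r * ψ ^ s := by
    linear_combination Fz r * ψ ^ s * neg_one_zpow_sq s
  rw [h]
  unfold Fz
  rw [zpow_add₀ goldenRatio_ne_zero, zpow_add₀ goldenConj_ne_zero]
  field_simp
  ring

lemma key_goldConj (r s : ℤ) : (-1 : ℝ) ^ s * Fz r * ψ ^ (-s) + Fz s * ψ ^ r = Fz (r + s) := by
  rw [goldConj_zpow_neg]
  have h : (-1 : ℝ) ^ s * Fz r * ((-1 : ℝ) ^ s * φ ^ s) = Fz r * φ ^ s := by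
    linear_combination Fz r * φ ^ s * neg_one_zpow_sq s
  rw [h]
  unfold Fz
  rw [zpow_add₀ goldenRatio_ne_zero, zpow_add₀ goldenConj_ne_zero]
  field_simp
  ring

lemma Lz_neg_mul (t : ℤ) : (-1 : ℝ) ^ t * Lz (-t) = Lz t := by
  unfold Lz
  rw [gold_zpow_neg, goldConj_zpow_neg]
  linear_combination (φ ^ t + ψ ^ t) * neg_one_zpow_sq t

lemma core_sum (r s t : ℤ) (N : ℕ) :
    ∑ j ∈ range (N + 1), (N.choose j : ℝ) * (-1) ^ (s * (j : ℤ)) * Fz r ^ j *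
      Fz s ^ (N - j) * Lz (r * N - (r + s) * j - t) = Lz (-t) * Fz (r + s) ^ N := by
  have hx : ∀ j ∈ range (N + 1),
      (N.choose j : ℝ) * (-1) ^ (s * (j : ℤ)) * Fz r ^ j * Fz s ^ (N - j) *
        Lz (r * N - (r + s) * j - t)
      = φ ^ (-t) * (((-1 : ℝ) ^ s * Fz r * φ ^ (-s)) ^ j * (Fz s * φ ^ r) ^ (N - j) * N.choose j)
        + ψ ^ (-t) * (((-1 : ℝ) ^ s * Fz r * ψ ^ (-s)) ^ j * (Fz s * ψ ^ r) ^ (N - j) *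
          N.choose j) := by
    intro j hj
    have hjN : j ≤ N := by simpa [Nat.lt_succ_iff] using hj
    have he : r * N - (r + s) * j - t = -t + (-s) * (j : ℤ) + r * ((N - j : ℕ) : ℤ) := by
      push_cast [Nat.cast_sub hjN]; ring
    have hLz : Lz (r * N - (r + s) * j - t)
        = (φ ^ (-t) * (φ ^ (-s)) ^ j * (φ ^ r) ^ (N - j))
          + (ψ ^ (-t) * (ψ ^ (-s)) ^ j * (ψ ^ r) ^ (N - j)) := by
      unfold Lz
      rw [he, zpow_add₀ goldenRatio_ne_zero, zpow_add₀ goldenRatio_ne_zero,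
        zpow_add₀ goldenConj_ne_zero, zpow_add₀ goldenConj_ne_zero,
        zpow_int_nat, zpow_int_nat, zpow_int_nat, zpow_int_nat]
    have hsign : (-1 : ℝ) ^ (s * (j : ℤ)) = ((-1 : ℝ) ^ s) ^ j := zpow_int_nat _ _ _
    rw [hLz, hsign]
    ring
  rw [Finset.sum_congr rfl hx, Finset.sum_add_distrib, ← Finset.mul_sum, ← Finset.mul_sum,
    ← add_pow, ← add_pow, key_gold, key_goldConj]
  unfold Lz
  ring

lemma real_main (r s t : ℤ) (n : ℕ) :
    ∑ k ∈ range (n + 1),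
      (n.choose k : ℝ) * (-1) ^ (s * ((k : ℤ) + 1) + 1 + t) * ((fibZ r : ℤ) : ℝ) ^ (k + 1) *
        ((fibZ s : ℤ) : ℝ) ^ (n - k) *
        ((lucasZ (r * n - s * ((k : ℤ) + 1) - r * k - t) : ℤ) : ℝ) / ((k : ℝ) + 1) =
    ((-1) ^ t * ((fibZ s : ℤ) : ℝ) ^ (n + 1) * ((lucasZ (r * (n + 1) - t) : ℤ) : ℝ) -
      ((lucasZ t : ℤ) : ℝ) * ((fibZ (r + s) : ℤ) : ℝ) ^ (n + 1)) / ((n : ℝ) + 1) := by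
  simp only [fibZ_real, lucasZ_real]
  have hn1 : ((n : ℝ) + 1) ≠ 0 := by positivity
  rw [eq_div_iff hn1, Finset.sum_mul]
  set g : ℕ → ℝ := fun j => ((n + 1).choose j : ℝ) * (-1) ^ (s * (j : ℤ) + 1 + t) *
    Fz r ^ j * Fz s ^ (n + 1 - j) * Lz (r * ((n + 1 : ℕ) : ℤ) - (r + s) * (j : ℤ) - t) with hg
  have hterm : ∀ k ∈ range (n + 1),
      (n.choose k : ℝ) * (-1) ^ (s * ((k : ℤ) + 1) + 1 + t) * Fz r ^ (k + 1) *
        Fz s ^ (n - k) * Lz (r * n - s * ((k : ℤ) + 1) - r * k - t) / ((k : ℝ) + 1) *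
        ((n : ℝ) + 1) = g (k + 1) := by
    intro k hk
    have hk1 : ((k : ℝ) + 1) ≠ 0 := by positivity
    have hc : ((n : ℝ) + 1) * (n.choose k : ℝ) = ((n + 1).choose (k + 1) : ℝ) * ((k : ℝ) + 1) := by
      exact_mod_cast congrArg (Nat.cast : ℕ → ℝ) (Nat.add_one_mul_choose_eq n k)
    have hidx : r * (n : ℤ) - s * ((k : ℤ) + 1) - r * (k : ℤ) - t
        = r * ((n + 1 : ℕ) : ℤ) - (r + s) * ((k : ℤ) + 1) - t := by push_cast; ring
    have hsub : n - k = n + 1 - (k + 1) := (Nat.succ_sub_succ n k).symm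
    have hcast : (((k + 1 : ℕ)) : ℤ) = (k : ℤ) + 1 := by push_cast; ring
    rw [hg]
    simp only [hcast]
    rw [← hidx, ← hsub]
    rw [div_mul_eq_mul_div, div_eq_iff hk1]
    linear_combination ((-1 : ℝ) ^ (s * ((k : ℤ) + 1) + 1 + t) * Fz r ^ (k + 1) *
      Fz s ^ (n - k) * Lz (r * (n : ℤ) - s * ((k : ℤ) + 1) - r * (k : ℤ) - t)) * hc
  rw [Finset.sum_congr rfl hterm]
  have hsplit : ∑ j ∈ range (n + 2), g j = (∑ k ∈ range (n + 1), g (k + 1)) + g 0 :=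
    Finset.sum_range_succ' g (n + 1)
  have hfull : ∑ j ∈ range (n + 2), g j = - Lz t * Fz (r + s) ^ (n + 1) := by
    have hgj : ∀ j ∈ range (n + 2), g j = (-(-1 : ℝ) ^ t) *
        (((n + 1).choose j : ℝ) * (-1) ^ (s * (j : ℤ)) * Fz r ^ j * Fz s ^ (n + 1 - j) *
          Lz (r * ((n + 1 : ℕ) : ℤ) - (r + s) * (j : ℤ) - t)) := by
      intro j hj
      have hexp : (-1 : ℝ) ^ (s * (j : ℤ) + 1 + t)
          = -(-1 : ℝ) ^ t * (-1 : ℝ) ^ (s * (j : ℤ)) := by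
        rw [zpow_add₀ (by norm_num : (-1 : ℝ) ≠ 0), zpow_add₀ (by norm_num : (-1 : ℝ) ≠ 0),
          zpow_one]
        ring
      rw [hg]
      simp only []
      rw [hexp]
      ring
    rw [Finset.sum_congr rfl hgj, ← Finset.mul_sum]
    have hcs := core_sum r s t (n + 1)
    rw [show n + 1 + 1 = n + 2 from rfl] at hcs
    rw [hcs]
    linear_combination (- Fz (r + s) ^ (n + 1)) * Lz_neg_mul t
  have hg0 : g 0 = -(-1 : ℝ) ^ t * Fz s ^ (n + 1) * Lz (r * ((n + 1 : ℕ) : ℤ) - t) := by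
    have hexp : (-1 : ℝ) ^ (s * ((0 : ℕ) : ℤ) + 1 + t) = -(-1 : ℝ) ^ t := by
      rw [show s * ((0 : ℕ) : ℤ) + 1 + t = 1 + t by push_cast; ring,
        zpow_add₀ (by norm_num : (-1 : ℝ) ≠ 0), zpow_one]
      ring
    rw [hg]
    simp only [hexp, Nat.choose_zero_right, Nat.cast_one, pow_zero]
    rw [show r * ((n + 1 : ℕ) : ℤ) - (r + s) * ((0 : ℕ) : ℤ) - t = r * ((n + 1 : ℕ) : ℤ) - t
      by push_cast; ring]
    simp only [Nat.sub_zero]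
    ring
  have hmain : (∑ k ∈ range (n + 1), g (k + 1)) = - Lz t * Fz (r + s) ^ (n + 1) - g 0 := by
    rw [← hfull, hsplit]; ring
  rw [hmain, hg0]
  rw [show r * ((n + 1 : ℕ) : ℤ) - t = r * ((n : ℤ) + 1) - t by push_cast; ring]
  ring

theorem stmt_7 (r s t : ℤ) (n : ℕ) :
    ∑ k ∈ range (n + 1),
      (n.choose k : ℚ) * (-1) ^ (s * (k + 1) + 1 + t) * (fibZ r : ℚ) ^ (k + 1) *
        (fibZ s : ℚ) ^ (n - k) * (lucasZ (r * n - s * (k + 1) - r * k - t) : ℚ) / (k + 1) =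
    ((-1) ^ t * (fibZ s : ℚ) ^ (n + 1) * (lucasZ (r * (n + 1) - t) : ℚ) -
      (lucasZ t : ℚ) * (fibZ (r + s) : ℚ) ^ (n + 1)) / (n + 1) := by
  have H := real_main r s t n
  rw [← Rat.cast_inj (α := ℝ)]
  push_cast at H ⊢
  convert H using 2
end

section
/- For any integer t and non-negative integer n: sum_{k=0}^n binom(n,k) * (-1)^k * F_{n-2k-1+t} / (k+1) = (F_{n+1+t} - F_t) / (n+1), and the same identity holds with F replaced by L throughout. -/
open Finset

lemma fibZ_rec (m : ℤ) : fibZ (m + 2) = fibZ (m + 1) + fibZ m := by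
  rcases le_or_gt 0 m with hm | hm
  · lift m to ℕ using hm
    have h0 : ((m:ℤ) + 2).toNat = m + 2 := by omega
    have h1 : ((m:ℤ) + 1).toNat = m + 1 := by omega
    simp only [fibZ, if_pos (by omega : (0:ℤ) ≤ (m:ℤ) + 2),
      if_pos (by omega : (0:ℤ) ≤ (m:ℤ) + 1), if_pos (by omega : (0:ℤ) ≤ (m:ℤ)),
      h0, h1, Int.toNat_natCast, Nat.fib_add_two]
    push_cast; ring
  · rcases eq_or_lt_of_le (by omega : m ≤ -1) with h | h
    · subst h; decide
    rcases eq_or_lt_of_le (by omega : m ≤ -2) with h2 | h2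
    · subst h2; decide
    obtain ⟨w, rfl⟩ : ∃ w : ℕ, m = -(w + 3) := ⟨(-m - 3).toNat, by omega⟩
    have e0 : (-(-((w:ℤ) + 3))).toNat = w + 3 := by omega
    have e1 : (-(-((w:ℤ) + 3) + 1)).toNat = w + 2 := by omega
    have e2 : (-(-((w:ℤ) + 3) + 2)).toNat = w + 1 := by omega
    simp only [fibZ, if_neg (by omega : ¬(0:ℤ) ≤ -((w:ℤ)+3) + 2),
      if_neg (by omega : ¬(0:ℤ) ≤ -((w:ℤ)+3) + 1), if_neg (by omega : ¬(0:ℤ) ≤ -((w:ℤ)+3)),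
      e0, e1, e2]
    have hf : (Nat.fib (w + 3) : ℤ) = Nat.fib (w + 2) + Nat.fib (w + 1) := by
      rw [show w + 3 = (w + 1) + 2 from rfl, Nat.fib_add_two]; push_cast; ring
    rw [hf]; ring

lemma lucasZ_rec (m : ℤ) : lucasZ (m + 2) = lucasZ (m + 1) + lucasZ m := by
  rcases le_or_gt 0 m with hm | hm
  · lift m to ℕ using hm
    have h0 : ((m:ℤ) + 2).toNat = m + 2 := by omega
    have h1 : ((m:ℤ) + 1).toNat = m + 1 := by omega
    simp only [lucasZ, if_pos (by omega : (0:ℤ) ≤ (m:ℤ) + 2),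
      if_pos (by omega : (0:ℤ) ≤ (m:ℤ) + 1), if_pos (by omega : (0:ℤ) ≤ (m:ℤ)),
      h0, h1, Int.toNat_natCast]
    rw [lucasNat]
  · rcases eq_or_lt_of_le (by omega : m ≤ -1) with h | h
    · subst h; decide
    rcases eq_or_lt_of_le (by omega : m ≤ -2) with h2 | h2
    · subst h2; decide
    obtain ⟨w, rfl⟩ : ∃ w : ℕ, m = -(w + 3) := ⟨(-m - 3).toNat, by omega⟩
    have e0 : (-(-((w:ℤ) + 3))).toNat = w + 3 := by omega
    have e1 : (-(-((w:ℤ) + 3) + 1)).toNat = w + 2 := by omega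
    have e2 : (-(-((w:ℤ) + 3) + 2)).toNat = w + 1 := by omega
    simp only [lucasZ, if_neg (by omega : ¬(0:ℤ) ≤ -((w:ℤ)+3) + 2),
      if_neg (by omega : ¬(0:ℤ) ≤ -((w:ℤ)+3) + 1), if_neg (by omega : ¬(0:ℤ) ≤ -((w:ℤ)+3)),
      e0, e1, e2]
    have hf : lucasNat (w + 3) = lucasNat (w + 2) + lucasNat (w + 1) := by
      rw [show w + 3 = (w + 1) + 2 from rfl, lucasNat]
    rw [hf]; ring


lemma key (a : ℤ → ℚ) (h : ∀ m : ℤ, a (m + 2) = a (m + 1) + a m) :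
    ∀ (m : ℕ) (t : ℤ),
      ∑ j ∈ range (m + 1), (m.choose j : ℚ) * (-1) ^ j * a (t + m - 2 * j) = a t := by
  intro m
  induction m with
  | zero => intro t; simp
  | succ m ih =>
    intro t
    rw [Finset.sum_range_succ'
      (fun j => (((m+1).choose j : ℚ)) * (-1) ^ j * a (t + (m+1 : ℕ) - 2 * j)) (m+1)]
    have split : ∀ j ∈ range (m + 1),
        (((m+1).choose (j+1) : ℚ)) * (-1) ^ (j+1) * a (t + ((m+1 : ℕ) : ℤ) - 2 * ((j+1 : ℕ) : ℤ)) =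
          -((m.choose j : ℚ) * (-1) ^ j * a ((t-1) + m - 2 * j))
          + (m.choose (j+1) : ℚ) * (-1) ^ (j+1) * a ((t+1) + m - 2 * ((j+1 : ℕ) : ℤ)) := by
      intro j _
      have e1 : t + ((m+1 : ℕ) : ℤ) - 2 * ((j+1 : ℕ) : ℤ) = (t-1) + m - 2 * j := by push_cast; ring
      have e2 : (t+1) + (m : ℤ) - 2 * ((j+1 : ℕ) : ℤ) = (t-1) + m - 2 * j := by push_cast; ring
      rw [Nat.choose_succ_succ, e1, e2]
      push_cast; ring
    rw [Finset.sum_congr rfl split, Finset.sum_add_distrib, Finset.sum_neg_distrib, ih (t-1)]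
    have hB : ∑ j ∈ range (m + 1),
        (m.choose (j+1) : ℚ) * (-1) ^ (j+1) * a ((t+1) + (m:ℤ) - 2 * ((j+1 : ℕ) : ℤ))
        = a (t+1) - a ((t+1) + m) := by
      have h2 := Finset.sum_range_succ'
        (fun j => ((m.choose j : ℚ)) * (-1) ^ j * a ((t+1) + (m:ℤ) - 2 * j)) (m+1)
      have h3 := Finset.sum_range_succ
        (fun j => ((m.choose j : ℚ)) * (-1) ^ j * a ((t+1) + (m:ℤ) - 2 * j)) (m+1)
      rw [h3, Nat.choose_succ_self] at h2
      simp only [Nat.cast_zero, zero_mul, add_zero, ih (t+1)] at h2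
      push_cast at h2 ⊢
      simp only [Nat.choose_zero_right, Nat.cast_one, pow_zero, mul_zero, sub_zero] at h2
      linarith [h2]
    push_cast at hB ⊢
    rw [hB]
    have harg2 : t + ((m:ℤ) + 1) = t + 1 + m := by ring
    have hrec := h (t - 1)
    have r1 : a (t - 1 + 2) = a (t + 1) := by congr 1; ring
    have r2 : a (t - 1 + 1) = a t := by congr 1; ring
    rw [r1, r2] at hrec
    simp only [Nat.choose_zero_right, Nat.cast_one, pow_zero, mul_zero, sub_zero, one_mul,
      Nat.cast_zero, harg2]
    linarith [hrec]

lemma main (a : ℤ → ℚ) (h : ∀ m : ℤ, a (m + 2) = a (m + 1) + a m) (t : ℤ) (n : ℕ) :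
    ∑ k ∈ range (n + 1), (n.choose k : ℚ) * (-1) ^ k * a ((n : ℤ) - 2 * k - 1 + t) / (k + 1)
      = (a ((n : ℤ) + 1 + t) - a t) / ((n : ℚ) + 1) := by
  have hk := key a h (n + 1) t
  rw [Finset.sum_range_succ'
    (fun j => (((n+1).choose j : ℚ)) * (-1) ^ j * a (t + ((n+1 : ℕ) : ℤ) - 2 * j)) (n+1)] at hk
  simp only [Nat.choose_zero_right, Nat.cast_one, pow_zero, Nat.cast_zero, mul_zero, sub_zero,
    one_mul] at hk
  -- hk : ∑ k ∈ range (n+1), C(n+1,k+1) * (-1)^(k+1) * a (t + (n+1) - 2*(k+1)) + a (t + (n+1)) = a t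
  have hS : ∑ k ∈ range (n + 1),
      ((n+1).choose (k+1) : ℚ) * (-1) ^ k * a ((n : ℤ) - 2 * k - 1 + t)
      = a ((n : ℤ) + 1 + t) - a t := by
    have flip : ∀ k ∈ range (n + 1),
        ((n+1).choose (k+1) : ℚ) * (-1) ^ (k+1) * a (t + ((n+1 : ℕ) : ℤ) - 2 * ((k+1 : ℕ) : ℤ))
        = -(((n+1).choose (k+1) : ℚ) * (-1) ^ k * a ((n : ℤ) - 2 * k - 1 + t)) := by
      intro k _
      have e : t + ((n+1 : ℕ) : ℤ) - 2 * ((k+1 : ℕ) : ℤ) = (n : ℤ) - 2 * k - 1 + t := by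
        push_cast; ring
      rw [e]; ring
    rw [Finset.sum_congr rfl flip, Finset.sum_neg_distrib] at hk
    have e2 : a (t + ((n+1 : ℕ) : ℤ)) = a ((n : ℤ) + 1 + t) := by congr 1; push_cast; ring
    rw [e2] at hk
    linarith [hk]
  rw [← hS, eq_div_iff (show ((n : ℚ) + 1) ≠ 0 by positivity), Finset.sum_mul]
  apply Finset.sum_congr rfl
  intro k hk'
  have hc : ((n+1).choose (k+1) : ℚ) * ((k : ℚ) + 1) = ((n : ℚ) + 1) * (n.choose k : ℚ) := by
    exact_mod_cast (Nat.add_one_mul_choose_eq n k).symm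
  have hk1 : ((k : ℚ) + 1) ≠ 0 := by positivity
  field_simp
  linear_combination (-a ((n : ℤ) - 2 * k - 1 + t)) * hc

theorem stmt_8 (t : ℤ) (n : ℕ) :
    (∑ k ∈ range (n + 1),
      (n.choose k : ℚ) * (-1) ^ k * (fibZ ((n : ℤ) - 2 * k - 1 + t) : ℚ) / (k + 1) =
      ((fibZ (n + 1 + t) : ℚ) - fibZ t) / (n + 1)) ∧
    (∑ k ∈ range (n + 1),
      (n.choose k : ℚ) * (-1) ^ k * (lucasZ ((n : ℤ) - 2 * k - 1 + t) : ℚ) / (k + 1) =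
      ((lucasZ (n + 1 + t) : ℚ) - lucasZ t) / (n + 1)) := by
  constructor
  · exact main (fun m => (fibZ m : ℚ)) (fun m => by push_cast [fibZ_rec m]; ring) t n
  · exact main (fun m => (lucasZ m : ℚ)) (fun m => by push_cast [lucasZ_rec m]; ring) t n
end

section
/- For any integer t and non-negative integer n: sum_{k=0}^n binom(n,k) * (-1)^k * F_{2n-3k-1+t} / (k+1) = (F_{2n+2+t} - F_t * 2^(n+1)) / (n+1), and the same identity holds with F replaced by L throughout. -/
open Finset

local notation "φ" => Real.goldenRatio
local notation "ψ" => Real.goldenConj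

-- Binet for Lucas (nat)
lemma lucasNat_binet : ∀ m : ℕ, (lucasNat m : ℝ) = φ ^ m + ψ ^ m := by
  intro m
  induction m using Nat.twoStepInduction with
  | zero => norm_num [lucasNat]
  | one => norm_num [lucasNat, Real.goldenRatio_add_goldenConj]
  | more m ih1 ih2 =>
    have : (lucasNat (m + 2) : ℝ) = (lucasNat (m+1) : ℝ) + lucasNat m := by
      rw [lucasNat]; push_cast; ring
    rw [this, ih1, ih2]
    have h5 : Real.sqrt 5 ^ 2 = 5 := Real.sq_sqrt (by norm_num)
    linear_combination φ ^ m * Real.goldenRatio_sq + ψ ^ m * Real.goldenConj_sq - ((φ ^ m + ψ ^ m) / 2) * h5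

lemma gold_inv : φ⁻¹ = -ψ := by
  have h : φ * -ψ = 1 := by rw [mul_neg, Real.goldenRatio_mul_goldenConj]; ring
  exact inv_eq_of_mul_eq_one_right h

lemma goldConj_inv : ψ⁻¹ = -φ := by
  have h : ψ * -φ = 1 := by
    have := Real.goldenRatio_mul_goldenConj
    nlinarith [Real.goldenRatio_mul_goldenConj]
  exact inv_eq_of_mul_eq_one_right h

lemma fibZ_binet (m : ℤ) : (fibZ m : ℝ) = (φ ^ m - ψ ^ m) / Real.sqrt 5 := by
  rcases le_or_gt 0 m with h | h
  · rw [fibZ, if_pos h]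
    rw [show m = ((m.toNat : ℕ) : ℤ) by simp [Int.toNat_of_nonneg h]]
    rw [zpow_natCast, zpow_natCast]
    exact_mod_cast Real.coe_fib_eq m.toNat
  · rw [fibZ, if_neg (not_le.mpr h)]
    set k := (-m).toNat with hk
    have hm : m = -(k : ℤ) := by omega
    rw [hm, zpow_neg, zpow_neg, zpow_natCast, zpow_natCast,
      ← inv_pow, ← inv_pow, gold_inv, goldConj_inv]
    rw [Int.cast_mul, Int.cast_pow, Int.cast_neg, Int.cast_one, Int.cast_natCast,
      Real.coe_fib_eq k, pow_succ,
      show (-ψ) ^ k = (-1 : ℝ) ^ k * ψ ^ k from by rw [neg_pow],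
      show (-φ) ^ k = (-1 : ℝ) ^ k * φ ^ k from by rw [neg_pow]]
    ring

lemma lucasZ_binet (m : ℤ) : (lucasZ m : ℝ) = φ ^ m + ψ ^ m := by
  rcases le_or_gt 0 m with h | h
  · rw [lucasZ, if_pos h]
    rw [show m = ((m.toNat : ℕ) : ℤ) by simp [Int.toNat_of_nonneg h]]
    rw [zpow_natCast, zpow_natCast]
    exact lucasNat_binet m.toNat
  · rw [lucasZ, if_neg (not_le.mpr h)]
    set k := (-m).toNat with hk
    have hm : m = -(k : ℤ) := by omega
    rw [hm, zpow_neg, zpow_neg, zpow_natCast, zpow_natCast,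
      ← inv_pow, ← inv_pow, gold_inv, goldConj_inv]
    rw [Int.cast_mul, Int.cast_pow, Int.cast_neg, Int.cast_one, lucasNat_binet k,
      show (-ψ) ^ k = (-1 : ℝ) ^ k * ψ ^ k from by rw [neg_pow],
      show (-φ) ^ k = (-1 : ℝ) ^ k * φ ^ k from by rw [neg_pow]]
    ring

-- polynomial key lemma
lemma key_sum (a : ℝ) (n : ℕ) :
    ∑ k ∈ range (n + 1), ((n + 1).choose (k + 1) : ℝ) * (-1) ^ k * a ^ (n - k)
      = a ^ (n + 1) - (a - 1) ^ (n + 1) := by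
  have h := add_pow (-1 : ℝ) a (n + 1)
  rw [Finset.sum_range_succ'] at h
  have h0 : (-1 : ℝ) ^ 0 * a ^ (n + 1 - 0) * ((n+1).choose 0 : ℝ) = a ^ (n + 1) := by simp
  rw [h0] at h
  rw [show ((-1 : ℝ) + a) = a - 1 by ring] at h
  have h2 : ∑ i ∈ range (n + 1), (-1 : ℝ) ^ (i + 1) * a ^ (n + 1 - (i + 1)) * ((n+1).choose (i+1) : ℝ)
      = - ∑ k ∈ range (n + 1), ((n + 1).choose (k + 1) : ℝ) * (-1) ^ k * a ^ (n - k) := by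
    rw [← Finset.sum_neg_distrib]
    apply Finset.sum_congr rfl
    intro i _
    have : n + 1 - (i + 1) = n - i := by omega
    rw [this, pow_succ]
    ring
  rw [h2] at h
  linarith

-- main real lemma
lemma main_real (x : ℝ) (hx : x ≠ 0) (hsq : x ^ 2 = x + 1) (t : ℤ) (n : ℕ) :
    ∑ k ∈ range (n + 1),
      (n.choose k : ℝ) * (-1) ^ k * x ^ (2 * (n : ℤ) - 3 * k - 1 + t) / (k + 1)
      = (x ^ (2 * (n : ℤ) + 2 + t) - x ^ t * 2 ^ (n + 1)) / (n + 1) := by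
  have h3 : x ^ 3 = 2 * x + 1 := by
    calc x ^ 3 = x * x ^ 2 := by ring
    _ = x * (x + 1) := by rw [hsq]
    _ = x ^ 2 + x := by ring
    _ = (x + 1) + x := by rw [hsq]
    _ = 2 * x + 1 := by ring
  set c := x ^ (t - (n : ℤ) - 1) with hc
  have hterm : ∀ k ∈ range (n + 1),
      (n.choose k : ℝ) * (-1) ^ k * x ^ (2 * (n : ℤ) - 3 * k - 1 + t) / (k + 1)
      = (n.choose k : ℝ) * (-1) ^ k * (c * (x ^ 3) ^ (n - k)) / (k + 1) := by
    intro k hk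
    have hkn : k ≤ n := by simpa [Nat.lt_succ_iff] using Finset.mem_range.mp hk
    have he : 2 * (n : ℤ) - 3 * k - 1 + t = (t - (n : ℤ) - 1) + (3 * (n - k) : ℕ) := by
      push_cast [Nat.cast_sub hkn]
      ring
    rw [he, zpow_add₀ hx, zpow_natCast, pow_mul]
  rw [Finset.sum_congr rfl hterm]
  have hE : x ^ (2 * (n : ℤ) + 2 + t) = c * (x ^ 3) ^ (n + 1) := by
    have : 2 * (n : ℤ) + 2 + t = (t - (n : ℤ) - 1) + (3 * (n + 1) : ℕ) := by push_cast; ring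
    rw [this, zpow_add₀ hx, zpow_natCast, pow_mul, hc]
  have hT : x ^ t = c * x ^ (n + 1) := by
    have : t = (t - (n : ℤ) - 1) + ((n + 1 : ℕ) : ℤ) := by push_cast; ring
    rw [this, zpow_add₀ hx, zpow_natCast, hc]
  rw [hE, hT]
  have hn1 : ((n : ℝ) + 1) ≠ 0 := by positivity
  rw [eq_div_iff hn1, Finset.sum_mul]
  have hterm2 : ∀ k ∈ range (n + 1),
      (n.choose k : ℝ) * (-1) ^ k * (c * (x ^ 3) ^ (n - k)) / (k + 1) * ((n : ℝ) + 1)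
      = c * (((n + 1).choose (k + 1) : ℝ) * (-1) ^ k * (x ^ 3) ^ (n - k)) := by
    intro k _
    have hch : ((n : ℝ) + 1) * (n.choose k : ℝ) = ((n + 1).choose (k + 1) : ℝ) * ((k : ℝ) + 1) := by
      have := Nat.add_one_mul_choose_eq n k
      exact_mod_cast this
    have hk1 : ((k : ℝ) + 1) ≠ 0 := by positivity
    rw [div_mul_eq_mul_div, div_eq_iff hk1]
    linear_combination ((-1 : ℝ) ^ k * (c * (x ^ 3) ^ (n - k))) * hch
  rw [Finset.sum_congr rfl hterm2, ← Finset.mul_sum, key_sum]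
  have : x ^ 3 - 1 = 2 * x := by rw [h3]; ring
  rw [this]
  ring

lemma combo (α β : ℝ) (t : ℤ) (n : ℕ) :
    ∑ k ∈ range (n + 1),
      (n.choose k : ℝ) * (-1) ^ k * (α * φ ^ (2 * (n : ℤ) - 3 * k - 1 + t)
        + β * ψ ^ (2 * (n : ℤ) - 3 * k - 1 + t)) / (k + 1)
      = ((α * φ ^ (2 * (n : ℤ) + 2 + t) + β * ψ ^ (2 * (n : ℤ) + 2 + t))
        - (α * φ ^ t + β * ψ ^ t) * 2 ^ (n + 1)) / (n + 1) := by
  have hφ := main_real φ Real.goldenRatio_ne_zero Real.goldenRatio_sq t n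
  have hψ := main_real ψ Real.goldenConj_ne_zero Real.goldenConj_sq t n
  have : ∑ k ∈ range (n + 1),
      (n.choose k : ℝ) * (-1) ^ k * (α * φ ^ (2 * (n : ℤ) - 3 * k - 1 + t)
        + β * ψ ^ (2 * (n : ℤ) - 3 * k - 1 + t)) / (k + 1)
      = α * ∑ k ∈ range (n + 1),
          (n.choose k : ℝ) * (-1) ^ k * φ ^ (2 * (n : ℤ) - 3 * k - 1 + t) / (k + 1)
        + β * ∑ k ∈ range (n + 1),
          (n.choose k : ℝ) * (-1) ^ k * ψ ^ (2 * (n : ℤ) - 3 * k - 1 + t) / (k + 1) := by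
    rw [Finset.mul_sum, Finset.mul_sum, ← Finset.sum_add_distrib]
    apply Finset.sum_congr rfl
    intro k _
    ring
  rw [this, hφ, hψ]
  ring

theorem stmt_9 (t : ℤ) (n : ℕ) :
    (∑ k ∈ range (n + 1),
      (n.choose k : ℚ) * (-1) ^ k * (fibZ (2 * (n : ℤ) - 3 * k - 1 + t) : ℚ) / (k + 1) =
      ((fibZ (2 * n + 2 + t) : ℚ) - fibZ t * 2 ^ (n + 1)) / (n + 1)) ∧
    (∑ k ∈ range (n + 1),
      (n.choose k : ℚ) * (-1) ^ k * (lucasZ (2 * (n : ℤ) - 3 * k - 1 + t) : ℚ) / (k + 1) =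
      ((lucasZ (2 * n + 2 + t) : ℚ) - lucasZ t * 2 ^ (n + 1)) / (n + 1)) := by
  have s5 : Real.sqrt 5 ≠ 0 := by positivity
  have hfib : ∀ m : ℤ, ((fibZ m : ℤ) : ℝ)
      = (1 / Real.sqrt 5) * φ ^ m + (-(1 / Real.sqrt 5)) * ψ ^ m := by
    intro m
    rw [fibZ_binet]
    field_simp
    ring
  have hluc : ∀ m : ℤ, ((lucasZ m : ℤ) : ℝ) = (1 : ℝ) * φ ^ m + (1 : ℝ) * ψ ^ m := by
    intro m
    rw [lucasZ_binet]; ring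
  constructor
  · apply Rat.cast_injective (α := ℝ)
    push_cast
    rw [hfib, hfib]
    have h := combo (1 / Real.sqrt 5) (-(1 / Real.sqrt 5)) t n
    calc ∑ k ∈ range (n + 1),
        (n.choose k : ℝ) * (-1) ^ k * ((fibZ (2 * (n : ℤ) - 3 * k - 1 + t) : ℤ) : ℝ) / (k + 1)
        = ∑ k ∈ range (n + 1),
          (n.choose k : ℝ) * (-1) ^ k * ((1 / Real.sqrt 5) * φ ^ (2 * (n : ℤ) - 3 * k - 1 + t)
            + (-(1 / Real.sqrt 5)) * ψ ^ (2 * (n : ℤ) - 3 * k - 1 + t)) / (k + 1) := by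
          apply Finset.sum_congr rfl; intro k _; rw [hfib]
      _ = _ := by rw [h]
  · apply Rat.cast_injective (α := ℝ)
    push_cast
    rw [hluc, hluc]
    have h := combo 1 1 t n
    calc ∑ k ∈ range (n + 1),
        (n.choose k : ℝ) * (-1) ^ k * ((lucasZ (2 * (n : ℤ) - 3 * k - 1 + t) : ℤ) : ℝ) / (k + 1)
        = ∑ k ∈ range (n + 1),
          (n.choose k : ℝ) * (-1) ^ k * ((1 : ℝ) * φ ^ (2 * (n : ℤ) - 3 * k - 1 + t)
            + (1 : ℝ) * ψ ^ (2 * (n : ℤ) - 3 * k - 1 + t)) / (k + 1) := by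
          apply Finset.sum_congr rfl; intro k _; rw [hluc]
      _ = _ := by rw [h]
end

section
/- For any integer t and non-negative integer n: sum_{k=0}^n binom(n,k) * (-1)^k * F_{2n-k+1+t} / (k+1) = (F_{2n+2+t} - F_t) / (n+1), and similarly with Lucas numbers: sum_{k=0}^n binom(n,k) * (-1)^k * L_{2n-k+1+t} / (k+1) = (L_{2n+2+t} - L_t) / (n+1). -/
open Finset

lemma fibZ_coe (a : ℕ) : fibZ (a : ℤ) = (Nat.fib a : ℤ) := by simp [fibZ]

lemma fibZ_neg (a : ℕ) : fibZ (-((a : ℤ) + 1)) = (-1) ^ a * (Nat.fib (a + 1) : ℤ) := by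
  have h : ¬ (0 ≤ -((a : ℤ) + 1)) := by omega
  rw [fibZ, if_neg h]
  have h2 : (-(-((a : ℤ) + 1))).toNat = a + 1 := by omega
  rw [h2, pow_succ, pow_succ]
  ring

lemma lucasZ_coe (a : ℕ) : lucasZ (a : ℤ) = lucasNat a := by simp [lucasZ]

lemma lucasZ_neg (a : ℕ) : lucasZ (-((a : ℤ) + 1)) = (-1) ^ (a + 1) * lucasNat (a + 1) := by
  have h : ¬ (0 ≤ -((a : ℤ) + 1)) := by omega
  have h2 : (-(-((a : ℤ) + 1))).toNat = a + 1 := by omega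
  rw [lucasZ, if_neg h, h2]

lemma lucasZ_zero : lucasZ 0 = 2 := by
  rw [show (0:ℤ) = ((0:ℕ):ℤ) by norm_num, lucasZ_coe]; rfl

lemma lucasZ_one : lucasZ 1 = 1 := by
  rw [show (1:ℤ) = ((1:ℕ):ℤ) by norm_num, lucasZ_coe]; rfl

section
variable (G : ℤ → ℚ) (hG : ∀ m : ℤ, G (m + 2) = G (m + 1) + G m)

lemma sum_pascal (m : ℕ) (f : ℕ → ℚ) :
    ∑ j ∈ range (m + 2), ((m + 1).choose j : ℚ) * f j
      = ∑ j ∈ range (m + 1), (m.choose j : ℚ) * f j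
        + ∑ j ∈ range (m + 1), (m.choose j : ℚ) * f (j + 1) := by
  have key : ∑ j ∈ range (m + 1), (m.choose (j+1) : ℚ) * f (j+1)
      = ∑ j ∈ range (m + 1), (m.choose j : ℚ) * f j - f 0 := by
    have h1 := Finset.sum_range_succ (fun j => (m.choose j : ℚ) * f j) (m + 1)
    have h2 := Finset.sum_range_succ' (fun j => (m.choose j : ℚ) * f j) (m + 1)
    rw [h2] at h1
    simp [Nat.choose_succ_self] at h1
    linarith [h1]
  rw [Finset.sum_range_succ' (fun j => ((m + 1).choose j : ℚ) * f j) (m + 1)]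
  have e : ∀ j ∈ range (m + 1), ((m + 1).choose (j + 1) : ℚ) * f (j + 1)
      = (m.choose j : ℚ) * f (j + 1) + (m.choose (j + 1) : ℚ) * f (j + 1) := by
    intro j _
    rw [Nat.choose_succ_succ]
    push_cast; ring
  rw [Finset.sum_congr rfl e, Finset.sum_add_distrib, key]
  simp
  ring

include hG in
lemma genB : ∀ (m : ℕ) (a : ℤ),
    ∑ j ∈ range (m + 1), (m.choose j : ℚ) * (-1) ^ j * G (a - j) = G (a - 2 * m) := by
  intro m
  induction m with
  | zero => intro a; simp
  | succ m ih =>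
    intro a
    have hp := sum_pascal m (fun j => (-1 : ℚ) ^ j * G (a - j))
    have e1 : ∑ j ∈ range (m + 2), ((m + 1).choose j : ℚ) * (-1) ^ j * G (a - j)
        = ∑ j ∈ range (m + 2), ((m + 1).choose j : ℚ) * ((-1) ^ j * G (a - j)) := by
      apply Finset.sum_congr rfl; intro j _; ring
    rw [e1, hp]
    have e2 : ∑ j ∈ range (m + 1), (m.choose j : ℚ) * ((-1) ^ j * G (a - j))
        = G (a - 2 * m) := by
      rw [← ih a]; apply Finset.sum_congr rfl; intro j _; ring
    have e3 : ∑ j ∈ range (m + 1), (m.choose j : ℚ) * ((-1) ^ (j + 1) * G (a - (j + 1 : ℕ)))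
        = - G (a - 1 - 2 * m) := by
      rw [← ih (a - 1), ← Finset.sum_neg_distrib]
      apply Finset.sum_congr rfl; intro j _
      push_cast
      rw [show a - ((j : ℤ) + 1) = a - 1 - j by ring, pow_succ]
      ring
    push_cast at e3 ⊢
    rw [e2, e3]
    have hr := hG (a - 2 * m - 2)
    rw [show a - 2 * m - 2 + 2 = a - 2 * m by ring,
        show a - 2 * m - 2 + 1 = a - 1 - 2 * m by ring] at hr
    rw [show a - 2 * (m + 1) = a - 2 * m - 2 by ring]
    linarith [hr]

include hG in
lemma genMain (t : ℤ) (n : ℕ) :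
    ∑ k ∈ range (n + 1), (n.choose k : ℚ) * (-1) ^ k * G (2 * (n : ℤ) - k + 1 + t) / (k + 1)
      = (G (2 * n + 2 + t) - G t) / (n + 1) := by
  have hB := genB G hG (n + 1) (2 * n + 2 + t)
  rw [Finset.sum_range_succ'
    (fun j => (((n+1).choose j : ℚ)) * (-1) ^ j * G (2 * (n:ℤ) + 2 + t - j)) (n + 1)] at hB
  simp only [Nat.choose_zero_right, pow_zero, Nat.cast_zero, sub_zero] at hB
  have hT : ∑ k ∈ range (n + 1),
      ((n + 1).choose (k + 1) : ℚ) * (-1) ^ k * G (2 * (n : ℤ) - k + 1 + t)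
      = G (2 * n + 2 + t) - G t := by
    have e : ∀ k ∈ range (n + 1),
        (((n+1).choose (k+1) : ℚ)) * (-1) ^ (k+1) * G (2 * (n:ℤ) + 2 + t - ((k : ℕ) + 1 : ℕ))
        = -(((n + 1).choose (k + 1) : ℚ) * (-1) ^ k * G (2 * (n : ℤ) - k + 1 + t)) := by
      intro k _
      rw [show (2 * (n:ℤ) + 2 + t - ((k : ℕ) + 1 : ℕ)) = 2 * (n:ℤ) - k + 1 + t by
        push_cast; ring, pow_succ]
      ring
    rw [Finset.sum_congr rfl e, Finset.sum_neg_distrib] at hB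
    have ht : (2 * (n:ℤ) + 2 + t - 2 * ((n:ℕ) + 1 : ℕ)) = t := by push_cast; ring
    rw [ht] at hB
    norm_num at hB
    linarith [hB]
  have hterm : ∀ k ∈ range (n + 1),
      (n.choose k : ℚ) * (-1) ^ k * G (2 * (n : ℤ) - k + 1 + t) / (k + 1)
      = ((n + 1).choose (k + 1) : ℚ) * (-1) ^ k * G (2 * (n : ℤ) - k + 1 + t) / (n + 1) := by
    intro k _
    have hc : ((n : ℚ) + 1) * (n.choose k : ℚ) = ((n + 1).choose (k + 1) : ℚ) * ((k : ℚ) + 1) := by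
      have := Nat.add_one_mul_choose_eq n k
      exact_mod_cast congrArg (fun x : ℕ => (x : ℚ)) this
    have hk1 : ((k : ℚ) + 1) ≠ 0 := by positivity
    have hn1 : ((n : ℚ) + 1) ≠ 0 := by positivity
    have hd : (n.choose k : ℚ) / ((k : ℚ) + 1) = ((n + 1).choose (k + 1) : ℚ) / ((n : ℚ) + 1) := by
      rw [div_eq_div_iff hk1 hn1]
      linear_combination hc
    calc (n.choose k : ℚ) * (-1) ^ k * G (2 * (n : ℤ) - k + 1 + t) / (k + 1)
        = ((n.choose k : ℚ) / ((k : ℚ) + 1)) * ((-1) ^ k * G (2 * (n : ℤ) - k + 1 + t)) := by ring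
      _ = (((n + 1).choose (k + 1) : ℚ) / ((n : ℚ) + 1)) * ((-1) ^ k * G (2 * (n : ℤ) - k + 1 + t)) := by rw [hd]
      _ = ((n + 1).choose (k + 1) : ℚ) * (-1) ^ k * G (2 * (n : ℤ) - k + 1 + t) / (n + 1) := by ring
  rw [Finset.sum_congr rfl hterm, ← Finset.sum_div, hT]

end

theorem stmt_10 (t : ℤ) (n : ℕ) :
    (∑ k ∈ range (n + 1),
      (n.choose k : ℚ) * (-1) ^ k * (fibZ (2 * (n : ℤ) - k + 1 + t) : ℚ) / (k + 1) =
      ((fibZ (2 * n + 2 + t) : ℚ) - fibZ t) / (n + 1)) ∧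
    (∑ k ∈ range (n + 1),
      (n.choose k : ℚ) * (-1) ^ k * (lucasZ (2 * (n : ℤ) - k + 1 + t) : ℚ) / (k + 1) =
      ((lucasZ (2 * n + 2 + t) : ℚ) - lucasZ t) / (n + 1)) := by
  have hf : ∀ m : ℤ, ((fibZ (m + 2) : ℚ)) = (fibZ (m + 1) : ℚ) + (fibZ m : ℚ) := by
    intro m; exact_mod_cast fibZ_rec m
  have hl : ∀ m : ℤ, ((lucasZ (m + 2) : ℚ)) = (lucasZ (m + 1) : ℚ) + (lucasZ m : ℚ) := by
    intro m; exact_mod_cast lucasZ_rec m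
  exact ⟨genMain (fun m => (fibZ m : ℚ)) hf t n, genMain (fun m => (lucasZ m : ℚ)) hl t n⟩
end

section
/- For any integers r, s, t and non-negative integer n: sum_{k=0}^n binom(n,k) * (-1)^k * F_{r+s}^(k+1) * F_s^(n-k) * F_{s(k+1)+(r+s)(n-k)-t} / (k+1) = (F_s^(n+1) * F_{(r+s)(n+1)-t} + (-1)^((s+1)(n+1)+t) * F_t * F_r^(n+1)) / (n+1). -/
open Finset

lemma fibZ_natCast (k : ℕ) : fibZ (k : ℤ) = Nat.fib k := by
  simp [fibZ]

lemma fibZ_neg_natCast (k : ℕ) : fibZ (-(k : ℤ)) = (-1) ^ (k+1) * Nat.fib k := by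
  rcases Nat.eq_zero_or_pos k with h | h
  · subst h; simp [fibZ]
  · have h2 : ¬ (0 ≤ -(k:ℤ)) := by omega
    simp [fibZ, h2]

lemma fibZ_add_two (n : ℤ) : fibZ (n + 2) = fibZ (n + 1) + fibZ n := by
  rcases le_or_gt 0 n with h | h
  · lift n to ℕ using h
    have e1 : (n : ℤ) + 2 = ((n + 2 : ℕ) : ℤ) := by push_cast; ring
    have e2 : (n : ℤ) + 1 = ((n + 1 : ℕ) : ℤ) := by push_cast; ring
    rw [e1, e2, fibZ_natCast, fibZ_natCast, fibZ_natCast, Nat.fib_add_two]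
    push_cast; ring
  · obtain ⟨k, rfl⟩ : ∃ k : ℕ, n = -(k:ℤ) - 1 := ⟨(-n-1).toNat, by omega⟩
    have e1 : -(k:ℤ) - 1 + 2 = -(k:ℤ) + 1 := by ring
    rcases Nat.eq_zero_or_pos k with h0 | h0
    · subst h0; norm_num [fibZ]
    · obtain ⟨j, rfl⟩ := Nat.exists_eq_add_of_le h0
      have e2 : -((1+j:ℕ):ℤ) - 1 + 2 = -(j:ℤ) := by push_cast; ring
      have e3 : -((1+j:ℕ):ℤ) - 1 + 1 = -((j+1:ℕ):ℤ) := by push_cast; ring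
      have e4 : -((1+j:ℕ):ℤ) - 1 = -((j+2:ℕ):ℤ) := by push_cast; ring
      rw [e2, e3, e4, fibZ_neg_natCast, fibZ_neg_natCast, fibZ_neg_natCast, Nat.fib_add_two]
      push_cast; ring

/-- `fibZ` viewed in `ℚ`. -/
noncomputable def F (n : ℤ) : ℚ := (fibZ n : ℚ)

lemma F_add_two (n : ℤ) : F (n + 2) = F (n + 1) + F n := by
  unfold F; exact_mod_cast congrArg (fun z : ℤ => (z : ℚ)) (fibZ_add_two n)

lemma F_zero : F 0 = 0 := by norm_num [F, fibZ]
lemma F_one : F 1 = 1 := by norm_num [F, fibZ]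

lemma e_add (a b : ℤ) : (-1:ℚ)^(a+b) = (-1)^a * (-1)^b := zpow_add₀ (by norm_num) a b
lemma e_sq (a : ℤ) : (-1:ℚ)^a * (-1:ℚ)^a = 1 := by rw [← mul_zpow]; norm_num
lemma e_congr {a b : ℤ} (k : ℤ) (h : a = b + 2*k) : (-1:ℚ)^a = (-1)^b := by
  subst h; rw [zpow_add₀ (by norm_num : (-1:ℚ) ≠ 0), zpow_mul]; norm_num
lemma e_pm (a : ℤ) : (-1:ℚ)^a = 1 ∨ (-1:ℚ)^a = -1 := mul_self_eq_one_iff.mp (e_sq a)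

lemma npow_eq_zpow (k : ℕ) : ((-1:ℚ))^(k+1) = (-1:ℚ)^((k:ℤ)+1) := by
  rw [show ((k:ℤ)+1) = ((k+1:ℕ):ℤ) by push_cast; ring, zpow_natCast]

lemma F_neg (c : ℤ) : F (-c) = (-1:ℚ)^(c+1) * F c := by
  rcases le_or_gt 0 c with h | h
  · lift c to ℕ using h
    unfold F
    rw [fibZ_neg_natCast, fibZ_natCast]
    push_cast
    rw [← npow_eq_zpow]
  · obtain ⟨k, rfl⟩ : ∃ k : ℕ, c = -(k:ℤ) := ⟨(-c).toNat, by omega⟩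
    unfold F
    rw [neg_neg, fibZ_natCast, fibZ_neg_natCast]
    have hs : (-1:ℚ)^(-(k:ℤ)+1) * (-1:ℚ)^((k:ℤ)+1) = 1 := by
      rw [← e_add, show -(k:ℤ)+1+((k:ℤ)+1) = 2*1 by ring, zpow_mul]; norm_num
    push_cast
    rw [npow_eq_zpow]
    linear_combination (-(Nat.fib k : ℚ)) * hs

lemma linrec (f g : ℤ → ℚ) (hf : ∀ k, f (k+2) = f (k+1) + f k)
    (hg : ∀ k, g (k+2) = g (k+1) + g k) (h0 : f 0 = g 0) (h1 : f 1 = g 1) (n : ℤ) :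
    f n = g n := by
  have H : ∀ k : ℤ, f k = g k ∧ f (k+1) = g (k+1) := by
    intro k
    induction k using Int.induction_on with
    | zero => exact ⟨h0, by simpa using h1⟩
    | succ k ih =>
      refine ⟨ih.2, ?_⟩
      have e : (k:ℤ)+1+1 = k+2 := by ring
      rw [e, hf, hg]
      rw [ih.1, ih.2]
    | pred k ih =>
      have hfk := hf (-(k:ℤ)-1); have hgk := hg (-(k:ℤ)-1)
      have e2 : -(k:ℤ)-1+2 = -k+1 := by ring
      have e1 : -(k:ℤ)-1+1 = -k := by ring
      rw [e2, e1] at hfk hgk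
      constructor
      · linarith [hfk, hgk, ih.1, ih.2]
      · rw [e1]; exact ih.1
  exact (H n).1

lemma cassini (a : ℤ) : F a * F (a+2) - F (a+1)^2 = (-1:ℚ)^(a+1) := by
  induction a using Int.induction_on with
  | zero => norm_num [F, fibZ]
  | succ k ih =>
    have r1 := F_add_two (k+1)
    have r0 := F_add_two k
    rw [show (k:ℤ)+1+2 = k+1+1+1 by ring, show (k:ℤ)+1+1 = k+2 by ring] at r1 ⊢
    rw [show (k:ℤ)+2+1 = k+1+1+1 by ring]
    have es : (-1:ℚ)^((k:ℤ)+2) = -(-1:ℚ)^((k:ℤ)+1) := by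
      rw [show (k:ℤ)+2 = ((k:ℤ)+1)+1 by ring, e_add]; norm_num
    rw [show (k:ℤ)+1+1+1 = (k:ℤ)+2+1 by ring]
    linear_combination F ((k:ℤ)+1) * r1 - F ((k:ℤ)+2) * r0 - ih - es
  | pred k ih =>
    have r1 := F_add_two (-(k:ℤ)-1)
    have r0 := F_add_two (-(k:ℤ)-2)
    rw [show -(k:ℤ)-1+2 = -k+1 by ring, show -(k:ℤ)-1+1 = -k by ring] at r1
    rw [show -(k:ℤ)-2+2 = -k by ring, show -(k:ℤ)-2+1 = -k-1 by ring] at r0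
    rw [show -(k:ℤ)-1+2 = -k+1 by ring, show -(k:ℤ)-1+1 = -k by ring]
    have r2 := F_add_two (-(k:ℤ))
    have es : (-1:ℚ)^(-(k:ℤ)+1) = -(-1:ℚ)^(-(k:ℤ)) := by
      rw [e_add (-(k:ℤ)) 1]; norm_num
    linear_combination F (-(k:ℤ)) * r2 - F (-(k:ℤ)+1) * r1 - ih - es

lemma docagne (a d : ℤ) : F a * F (a+d+1) - F (a+d) * F (a+1) = (-1:ℚ)^(a+1) * F d := by
  refine linrec (fun d => F a * F (a+d+1) - F (a+d) * F (a+1))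
    (fun d => (-1:ℚ)^(a+1) * F d) (fun k => ?_) (fun k => ?_) ?_ ?_ d
  · show F a * F (a+(k+2)+1) - F (a+(k+2)) * F (a+1) = _
    have r1 := F_add_two (a+k+1)
    have r2 := F_add_two (a+k)
    rw [show a+k+1+2 = a+(k+2)+1 by ring, show a+k+1+1 = a+(k+1)+1 by ring] at r1
    rw [show a+k+2 = a+(k+2) by ring, show a+k+1 = a+(k+1) by ring] at r2
    linear_combination F a * r1 - F (a+1) * r2
  · linear_combination (-1:ℚ)^(a+1) * F_add_two k
  · simp only [show a+0+1 = a+1 by ring, show a+0 = a by ring, F_zero]; ring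
  · simp only [show a+1+1 = a+2 by ring, F_one]
    linear_combination cassini a

lemma vajda (a b c : ℤ) : F a * F (b+c) - F b * F (a+c) = (-1:ℚ)^(a+1) * F (b-a) * F c := by
  refine linrec (fun c => F a * F (b+c) - F b * F (a+c))
    (fun c => (-1:ℚ)^(a+1) * F (b-a) * F c) (fun k => ?_) (fun k => ?_) ?_ ?_ c
  · show F a * F (b+(k+2)) - F b * F (a+(k+2)) = _
    have r1 := F_add_two (b+k)
    have r2 := F_add_two (a+k)
    rw [show b+k+2 = b+(k+2) by ring, show b+k+1 = b+(k+1) by ring] at r1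
    rw [show a+k+2 = a+(k+2) by ring, show a+k+1 = a+(k+1) by ring] at r2
    linear_combination F a * r1 - F b * r2
  · linear_combination (-1:ℚ)^(a+1) * F (b-a) * F_add_two k
  · simp only [show b+(0:ℤ) = b by ring, show a+(0:ℤ) = a by ring, F_zero]; ring
  · have h := docagne a (b-a)
    rw [show a+(b-a)+1 = b+1 by ring, show a+(b-a) = b by ring] at h
    simp only [F_one]
    linear_combination h

lemma key_s14 (r s t : ℤ) (m : ℕ) :
    (-F (r+s)) * ((-1:ℚ)^((s+1)*(m:ℤ)+(t-s)+1) * F (t-s) * (F r)^m)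
    + F s * ((-1:ℚ)^((s+1)*(m:ℤ)+(t-r-s)+1) * F (t-r-s) * (F r)^m)
    = (-1:ℚ)^((s+1)*((m:ℤ)+1)+t+1) * F t * (F r)^(m+1) := by
  have W : F s * F (r+s-t) - F (r+s) * F (s-t) = (-1:ℚ)^s * (-1:ℚ)^t * F r * F t := by
    have v := vajda s (r+s) (-t)
    rw [show (r+s)+(-t) = r+s-t by ring, show s+(-t) = s-t by ring,
      show r+s-s = r by ring] at v
    have n3 := F_neg t
    rw [e_add t 1] at n3
    rw [e_add s 1] at v
    rw [n3] at v
    linear_combination v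
  have n1 : F (t-s) = (-1:ℚ)^s * (-1:ℚ)^t * (-1) * F (s-t) := by
    have := F_neg (s-t)
    rw [show -(s-t) = t-s by ring] at this
    rw [this, e_congr (k := -t) (show s-t+1 = (s+t+1) + 2*(-t) by ring),
      e_add (s+t) 1, e_add s t]
    ring
  have n2 : F (t-r-s) = (-1:ℚ)^r * (-1:ℚ)^s * (-1:ℚ)^t * (-1) * F (r+s-t) := by
    have := F_neg (r+s-t)
    rw [show -(r+s-t) = t-r-s by ring] at this
    rw [this, e_congr (k := -t) (show r+s-t+1 = (r+s+t+1) + 2*(-t) by ring),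
      e_add (r+s+t) 1, e_add (r+s) t, e_add r s]
    ring
  have E1 : (-1:ℚ)^((s+1)*(m:ℤ)+(t-s)+1) =
      (-1:ℚ)^((s+1)*(m:ℤ)) * (-1:ℚ)^s * (-1:ℚ)^t * (-1) := by
    rw [e_congr (k := -s) (show (s+1)*(m:ℤ)+(t-s)+1 = ((s+1)*(m:ℤ)+s+t+1) + 2*(-s) by ring),
      e_add ((s+1)*(m:ℤ)+s+t) 1, e_add ((s+1)*(m:ℤ)+s) t, e_add ((s+1)*(m:ℤ)) s]
    ring
  have E2 : (-1:ℚ)^((s+1)*(m:ℤ)+(t-r-s)+1) =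
      (-1:ℚ)^((s+1)*(m:ℤ)) * (-1:ℚ)^r * (-1:ℚ)^s * (-1:ℚ)^t * (-1) := by
    rw [e_congr (k := -r-s) (show (s+1)*(m:ℤ)+(t-r-s)+1 = ((s+1)*(m:ℤ)+r+s+t+1) + 2*(-r-s) by ring),
      e_add ((s+1)*(m:ℤ)+r+s+t) 1, e_add ((s+1)*(m:ℤ)+r+s) t, e_add ((s+1)*(m:ℤ)+r) s,
      e_add ((s+1)*(m:ℤ)) r]
    ring
  have ER : (-1:ℚ)^((s+1)*((m:ℤ)+1)+t+1) =
      (-1:ℚ)^((s+1)*(m:ℤ)) * (-1:ℚ)^s * (-1:ℚ)^t := by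
    rw [e_congr (k := 1) (show (s+1)*((m:ℤ)+1)+t+1 = ((s+1)*(m:ℤ)+s+t) + 2*1 by ring),
      e_add ((s+1)*(m:ℤ)+s) t, e_add ((s+1)*(m:ℤ)) s]
  rw [E1, E2, ER, n1, n2]
  rcases e_pm ((s+1)*(m:ℤ)) with hA | hA <;> rcases e_pm r with hr | hr <;>
    rcases e_pm s with hs | hs <;> rcases e_pm t with ht | ht <;>
    (rw [hs, ht] at W; rw [hA, hr, hs, ht]) <;>
    first
      | linear_combination (F r)^m * W
      | linear_combination (-(F r)^m) * W

lemma core (r s : ℤ) (m : ℕ) : ∀ t : ℤ,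
    ∑ j ∈ range (m+1), (m.choose j : ℚ) * (-F (r+s))^j * (F s)^(m-j) *
      F (s*(j:ℤ) + (r+s)*((m:ℤ)-(j:ℤ)) - t)
    = (-1:ℚ)^((s+1)*(m:ℤ)+t+1) * F t * (F r)^m := by
  induction m with
  | zero =>
    intro t
    rw [Finset.sum_range_one]
    rw [show s*((0:ℕ):ℤ) + (r+s)*(((0:ℕ):ℤ)-((0:ℕ):ℤ)) - t = -t by push_cast; ring]
    rw [F_neg t]
    rw [show ((s+1)*((0:ℕ):ℤ)+t+1) = t+1 by push_cast; ring]
    simp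
  | succ m ih =>
    intro t
    have hX : ∀ j : ℕ, j ∈ range (m+1) →
        ((m+1).choose (j+1) : ℚ) * (-F (r+s))^(j+1) * (F s)^(m+1-(j+1)) *
          F (s*((j+1:ℕ):ℤ) + (r+s)*(((m+1:ℕ):ℤ)-((j+1:ℕ):ℤ)) - t)
        = (-F (r+s)) * ((m.choose j : ℚ) * (-F (r+s))^j * (F s)^(m-j) *
            F (s*(j:ℤ) + (r+s)*((m:ℤ)-(j:ℤ)) - (t-s)))
          + (m.choose (j+1) : ℚ) * (-F (r+s))^(j+1) * (F s)^(m-j) *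
            F (s*(j:ℤ) + (r+s)*((m:ℤ)-(j:ℤ)) - (t-s)) := by
      intro j hj
      rw [Nat.choose_succ_succ]
      rw [show s*((j+1:ℕ):ℤ) + (r+s)*(((m+1:ℕ):ℤ)-((j+1:ℕ):ℤ)) - t
            = s*(j:ℤ) + (r+s)*((m:ℤ)-(j:ℤ)) - (t-s) by push_cast; ring]
      rw [Nat.succ_sub_succ]
      push_cast
      ring
    calc ∑ j ∈ range (m+1+1), ((m+1).choose j : ℚ) * (-F (r+s))^j * (F s)^(m+1-j) *
          F (s*(j:ℤ) + (r+s)*(((m+1:ℕ):ℤ)-(j:ℤ)) - t)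
        = ∑ j ∈ range (m+1), ((m+1).choose (j+1) : ℚ) * (-F (r+s))^(j+1) * (F s)^(m+1-(j+1)) *
            F (s*((j+1:ℕ):ℤ) + (r+s)*(((m+1:ℕ):ℤ)-((j+1:ℕ):ℤ)) - t)
          + (F s)^(m+1) * F ((r+s)*((m+1:ℕ):ℤ) - t) := by
          rw [Finset.sum_range_succ']
          congr 1
          push_cast
          norm_num
      _ = (-F (r+s)) * (∑ j ∈ range (m+1), (m.choose j : ℚ) * (-F (r+s))^j * (F s)^(m-j) *
            F (s*(j:ℤ) + (r+s)*((m:ℤ)-(j:ℤ)) - (t-s)))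
          + ∑ j ∈ range (m+1), (m.choose (j+1) : ℚ) * (-F (r+s))^(j+1) * (F s)^(m-j) *
            F (s*(j:ℤ) + (r+s)*((m:ℤ)-(j:ℤ)) - (t-s))
          + (F s)^(m+1) * F ((r+s)*((m+1:ℕ):ℤ) - t) := by
          rw [Finset.sum_congr rfl hX, Finset.sum_add_distrib, Finset.mul_sum]
      _ = (-F (r+s)) * ((-1:ℚ)^((s+1)*(m:ℤ)+(t-s)+1) * F (t-s) * (F r)^m)
          + ∑ j ∈ range (m+1), (m.choose (j+1) : ℚ) * (-F (r+s))^(j+1) * (F s)^(m-j) *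
            F (s*(j:ℤ) + (r+s)*((m:ℤ)-(j:ℤ)) - (t-s))
          + (F s)^(m+1) * F ((r+s)*((m+1:ℕ):ℤ) - t) := by rw [ih (t-s)]
      _ = (-F (r+s)) * ((-1:ℚ)^((s+1)*(m:ℤ)+(t-s)+1) * F (t-s) * (F r)^m)
          + (∑ j ∈ range (m+1+1), (m.choose j : ℚ) * (-F (r+s))^j * (F s)^(m+1-j) *
              F (s*(j:ℤ) + (r+s)*(((m+1:ℕ):ℤ)-(j:ℤ)) - t)
            - (F s)^(m+1) * F ((r+s)*((m+1:ℕ):ℤ) - t))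
          + (F s)^(m+1) * F ((r+s)*((m+1:ℕ):ℤ) - t) := by
          congr 1
          congr 1
          have hG := Finset.sum_range_succ' (fun j => (m.choose j : ℚ) * (-F (r+s))^j *
            (F s)^(m+1-j) * F (s*(j:ℤ) + (r+s)*(((m+1:ℕ):ℤ)-(j:ℤ)) - t)) (m+1)
          rw [hG]
          have hpt : ∀ j : ℕ, j ∈ range (m+1) →
              (m.choose (j+1) : ℚ) * (-F (r+s))^(j+1) * (F s)^(m+1-(j+1)) *
                F (s*((j+1:ℕ):ℤ) + (r+s)*(((m+1:ℕ):ℤ)-((j+1:ℕ):ℤ)) - t)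
              = (m.choose (j+1) : ℚ) * (-F (r+s))^(j+1) * (F s)^(m-j) *
                F (s*(j:ℤ) + (r+s)*((m:ℤ)-(j:ℤ)) - (t-s)) := by
            intro j hj
            rw [Nat.succ_sub_succ,
              show s*((j+1:ℕ):ℤ) + (r+s)*(((m+1:ℕ):ℤ)-((j+1:ℕ):ℤ)) - t
                = s*(j:ℤ) + (r+s)*((m:ℤ)-(j:ℤ)) - (t-s) by push_cast; ring]
          rw [Finset.sum_congr rfl hpt]
          have h0 : ((m.choose 0 : ℚ)) * (-F (r+s))^0 * (F s)^(m+1-0) *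
              F (s*((0:ℕ):ℤ) + (r+s)*(((m+1:ℕ):ℤ)-((0:ℕ):ℤ)) - t)
              = (F s)^(m+1) * F ((r+s)*((m+1:ℕ):ℤ) - t) := by
            rw [show s*((0:ℕ):ℤ) + (r+s)*(((m+1:ℕ):ℤ)-((0:ℕ):ℤ)) - t
              = (r+s)*((m+1:ℕ):ℤ) - t by push_cast; ring]
            simp
          rw [h0]
          ring
      _ = (-F (r+s)) * ((-1:ℚ)^((s+1)*(m:ℤ)+(t-s)+1) * F (t-s) * (F r)^m)
          + (F s * (∑ j ∈ range (m+1), (m.choose j : ℚ) * (-F (r+s))^j * (F s)^(m-j) *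
              F (s*(j:ℤ) + (r+s)*((m:ℤ)-(j:ℤ)) - (t-r-s)))
            - (F s)^(m+1) * F ((r+s)*((m+1:ℕ):ℤ) - t))
          + (F s)^(m+1) * F ((r+s)*((m+1:ℕ):ℤ) - t) := by
          congr 2
          rw [Finset.sum_range_succ,
            show (m.choose (m+1) : ℚ) = 0 by rw [Nat.choose_succ_self]; norm_num,
            Finset.mul_sum]
          have hpt2 : ∀ j : ℕ, j ∈ range (m+1) →
              (m.choose j : ℚ) * (-F (r+s))^j * (F s)^(m+1-j) *
                F (s*(j:ℤ) + (r+s)*(((m+1:ℕ):ℤ)-(j:ℤ)) - t)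
              = F s * ((m.choose j : ℚ) * (-F (r+s))^j * (F s)^(m-j) *
                F (s*(j:ℤ) + (r+s)*((m:ℤ)-(j:ℤ)) - (t-r-s))) := by
            intro j hj
            have hj' : j ≤ m := by simpa [Nat.lt_succ_iff] using hj
            rw [show m+1-j = (m-j)+1 by omega, pow_succ,
              show s*(j:ℤ) + (r+s)*(((m+1:ℕ):ℤ)-(j:ℤ)) - t
                = s*(j:ℤ) + (r+s)*((m:ℤ)-(j:ℤ)) - (t-r-s) by push_cast; ring]
            ring
          rw [Finset.sum_congr rfl hpt2]
          ring
      _ = (-F (r+s)) * ((-1:ℚ)^((s+1)*(m:ℤ)+(t-s)+1) * F (t-s) * (F r)^m)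
          + F s * ((-1:ℚ)^((s+1)*(m:ℤ)+(t-r-s)+1) * F (t-r-s) * (F r)^m) := by
          rw [ih (t-r-s)]; ring
      _ = (-1:ℚ)^((s+1)*((m+1:ℕ):ℤ)+t+1) * F t * (F r)^(m+1) := by
          rw [show ((m+1:ℕ):ℤ) = (m:ℤ)+1 by push_cast; ring]
          exact key_s14 r s t m

theorem stmt_14 (r s t : ℤ) (n : ℕ) :
    ∑ k ∈ range (n + 1),
      (n.choose k : ℚ) * (-1) ^ k * (fibZ (r + s) : ℚ) ^ (k + 1) * (fibZ s : ℚ) ^ (n - k) *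
        (fibZ (s * (k + 1) + (r + s) * ((n : ℤ) - k) - t) : ℚ) / (k + 1) =
    ((fibZ s : ℚ) ^ (n + 1) * (fibZ ((r + s) * (n + 1) - t) : ℚ) +
      (-1) ^ ((s + 1) * ((n : ℤ) + 1) + t) * (fibZ t : ℚ) * (fibZ r : ℚ) ^ (n + 1)) / (n + 1) := by
  have hFdef : ∀ z : ℤ, ((fibZ z : ℚ)) = F z := fun z => rfl
  simp only [hFdef]
  have hn1 : ((n:ℚ)+1) ≠ 0 := by positivity
  rw [eq_div_iff hn1, Finset.sum_mul]
  have hcore := core r s (n+1) t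
  rw [show ((n+1:ℕ):ℤ) = (n:ℤ)+1 by push_cast; ring] at hcore
  have hG := Finset.sum_range_succ' (fun j => ((n+1).choose j : ℚ) * (-F (r+s))^j *
    (F s)^(n+1-j) * F (s*(j:ℤ) + (r+s)*(((n:ℤ)+1)-(j:ℤ)) - t)) (n+1)
  have hterm : ∀ k : ℕ, k ∈ range (n+1) →
      (n.choose k : ℚ) * (-1) ^ k * (F (r + s)) ^ (k + 1) * (F s) ^ (n - k) *
        F (s * ((k:ℤ) + 1) + (r + s) * ((n : ℤ) - (k:ℤ)) - t) / ((k:ℚ) + 1) * ((n:ℚ)+1)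
      = -(((n+1).choose (k+1) : ℚ) * (-F (r+s))^(k+1) * (F s)^(n+1-(k+1)) *
          F (s*((k+1:ℕ):ℤ) + (r+s)*(((n:ℤ)+1)-((k+1:ℕ):ℤ)) - t)) := by
    intro k hk
    have hc : (((n+1).choose (k+1) : ℕ) : ℚ) * ((k:ℚ)+1) = ((n:ℚ)+1) * (n.choose k : ℚ) := by
      exact_mod_cast congrArg (fun z : ℕ => (z : ℚ)) (Nat.add_one_mul_choose_eq n k).symm
    have hk1 : ((k:ℚ)+1) ≠ 0 := by positivity
    rw [Nat.succ_sub_succ,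
      show s*((k+1:ℕ):ℤ) + (r+s)*(((n:ℤ)+1)-((k+1:ℕ):ℤ)) - t
        = s * ((k:ℤ) + 1) + (r + s) * ((n : ℤ) - (k:ℤ)) - t by push_cast; ring]
    rw [div_mul_eq_mul_div, div_eq_iff hk1]
    rw [neg_pow (F (r+s)) (k+1)]
    linear_combination (-((-1:ℚ)^k * (F (r+s))^(k+1) * (F s)^(n-k) *
      F (s * ((k:ℤ) + 1) + (r + s) * ((n : ℤ) - (k:ℤ)) - t))) * hc
  rw [Finset.sum_congr rfl hterm, Finset.sum_neg_distrib]
  have hE : (-1:ℚ)^((s+1)*((n:ℤ)+1)+t+1) = -(-1:ℚ)^((s+1)*((n:ℤ)+1)+t) := by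
    rw [e_add ((s+1)*((n:ℤ)+1)+t) 1]; norm_num
  have h0 : ((n+1).choose 0 : ℚ) * (-F (r+s))^0 * (F s)^(n+1-0) *
      F (s*((0:ℕ):ℤ) + (r+s)*(((n:ℤ)+1)-((0:ℕ):ℤ)) - t)
      = (F s)^(n+1) * F ((r+s)*((n:ℤ)+1) - t) := by
    rw [show s*((0:ℕ):ℤ) + (r+s)*(((n:ℤ)+1)-((0:ℕ):ℤ)) - t
      = (r+s)*((n:ℤ)+1) - t by push_cast; ring]
    simp
  rw [h0] at hG
  linear_combination hG - hcore - (F t * (F r)^(n+1)) * hE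
end
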